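/- arXiv:1201.1540 — 6 statements merged into one kernel-verified Lean document; each statement's English description precedes it below -/
import Mathlib

section
/- Let β > 0 be fixed. For each n let Λ_n > 0 and N_n be a positive integer, and suppose Λ_n → ∞ and N_n/Λ_n → ∞ as n → ∞. Let C > 0 and for each n let ε^{(n)} : {1,2,...} → ℝ be a sequence satisfying |ε^{(n)}_k − π²k²/Λ_n²| ≤ C for all k ≥ 1. Define the canonical partition functions Z_n^{(V)} = Σ_{0<k_1<k_2<...<k_{N_n}} exp(−β Σ_{i=1}^{N_n} ε^{(n)}_{k_i}) and Z_n^{(0)} = Σ_{0<k_1<k_2<...<k_{N_n}} exp(−β Σ_{i=1}^{N_n} π²k_i²/Λ_n²), both sums running over strictly increasing N_n-tuples of positive integers. Then (ln Z_n^{(V)})/(ln Z_n^{(0)}) → 1 as n → ∞. -/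
open Real Filter

/-- Canonical partition function of `N` independent Fermi particles with one-particle
eigenvalues `ε`: the sum over strictly increasing `N`-tuples of positive integers,
i.e. over finite sets of positive integers of cardinality `N`. -/
noncomputable def canonicalZ (β : ℝ) (N : ℕ) (ε : ℕ+ → ℝ) : ℝ :=
  ∑' s : {s : Finset ℕ+ // s.card = N}, Real.exp (-β * ∑ k ∈ s.1, ε k)


lemma aux_card_le_max (s : Finset ℕ+) (hs : s.Nonempty) : s.card ≤ (s.max' hs : ℕ) := by
  have : s.card ≤ (Finset.Icc 1 (s.max' hs)).card := by
    apply Finset.card_le_card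
    intro k hk
    simp only [Finset.mem_Icc]
    exact ⟨k.one_le, s.le_max' k hk⟩
  simpa [PNat.card_Icc] using this

lemma aux_cube (s : Finset ℕ+) : s.card ^ 3 ≤ 3 * ∑ k ∈ s, (k : ℕ) ^ 2 := by
  induction s using Finset.strongInduction with
  | _ s ih =>
    rcases s.eq_empty_or_nonempty with rfl | hs
    · simp
    · set m := s.max' hs with hm
      have hmem : m ∈ s := s.max'_mem hs
      have hcard : s.card ≤ (m : ℕ) := aux_card_le_max s hs
      have hih := ih (s.erase m) (Finset.erase_ssubset hmem)
      have hsum : ∑ k ∈ s, (k : ℕ) ^ 2 = (m : ℕ) ^ 2 + ∑ k ∈ s.erase m, (k : ℕ) ^ 2 :=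
        (Finset.add_sum_erase _ _ hmem).symm
      have hc : (s.erase m).card = s.card - 1 := Finset.card_erase_of_mem hmem
      have hpos : 1 ≤ s.card := Finset.card_pos.mpr hs
      obtain ⟨p, hp⟩ : ∃ p, s.card = p + 1 := ⟨s.card - 1, by omega⟩
      rw [hsum, hp]
      rw [hc, hp] at hih
      simp only [Nat.add_sub_cancel] at hih
      have h2 : p + 1 ≤ (m : ℕ) := hp ▸ hcard
      nlinarith


lemma aux_gauss (t : ℝ) (ht : 0 < t) (T : Finset ℕ+) :
    ∑ k ∈ T, Real.exp (-(t * ((k : ℕ) : ℝ) ^ 2)) ≤ 2 / Real.sqrt t + 2 := by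
  classical
  have hst : 0 < Real.sqrt t := Real.sqrt_pos.mpr ht
  set M : ℕ := ⌈1 / Real.sqrt t⌉₊ with hM
  have hM1 : 1 ≤ M := Nat.one_le_ceil_iff.mpr (by positivity)
  have hMle : (M : ℝ) ≤ 1 / Real.sqrt t + 1 := by
    have := Nat.ceil_lt_add_one (a := 1 / Real.sqrt t) (by positivity)
    linarith
  have hMge : 1 / Real.sqrt t ≤ (M : ℝ) := Nat.le_ceil _
  have htM : Real.sqrt t ≤ t * M := by
    calc Real.sqrt t = t * (1 / Real.sqrt t) := by
          rw [mul_one_div]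
          rw [eq_div_iff (ne_of_gt hst), Real.mul_self_sqrt ht.le]
      _ ≤ t * M := by nlinarith
  have htMpos : 0 < t * M := lt_of_lt_of_le hst htM
  rw [← Finset.sum_filter_add_sum_filter_not T (fun k : ℕ+ => (k : ℕ) ≤ M)]
  have hpart1 : ∑ k ∈ T.filter (fun k : ℕ+ => (k : ℕ) ≤ M), Real.exp (-(t * ((k : ℕ) : ℝ) ^ 2))
      ≤ (M : ℝ) := by
    calc ∑ k ∈ T.filter (fun k : ℕ+ => (k : ℕ) ≤ M), Real.exp (-(t * ((k : ℕ) : ℝ) ^ 2))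
        ≤ ∑ k ∈ T.filter (fun k : ℕ+ => (k : ℕ) ≤ M), 1 := by
          apply Finset.sum_le_sum
          intro k _
          rw [Real.exp_le_one_iff]
          have : (0:ℝ) ≤ t * ((k : ℕ) : ℝ) ^ 2 := by positivity
          linarith
      _ = ((T.filter (fun k : ℕ+ => (k : ℕ) ≤ M)).card : ℝ) := by simp
      _ ≤ (M : ℝ) := by
          have hcard : (T.filter (fun k : ℕ+ => (k : ℕ) ≤ M)).card ≤ (Finset.Icc 1 M).card := by
            apply Finset.card_le_card_of_injOn (fun k : ℕ+ => (k : ℕ))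
            · intro k hk
              simp only [Finset.coe_filter, Set.mem_setOf_eq, Finset.mem_coe, Finset.mem_filter] at hk
              simp only [Finset.coe_Icc, Set.mem_Icc, Finset.mem_coe, Finset.mem_Icc]
              exact ⟨k.one_le, hk.2⟩
            · intro a _ b _ h; exact PNat.coe_injective h
          rw [Nat.card_Icc] at hcard
          have : (T.filter (fun k : ℕ+ => (k : ℕ) ≤ M)).card ≤ M := by omega
          exact_mod_cast this
  set r : ℝ := Real.exp (-(t * M)) with hr
  have hr0 : 0 ≤ r := (Real.exp_pos _).le
  have hr1 : r < 1 := by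
    rw [hr, Real.exp_lt_one_iff]; linarith
  have hpart2 : ∑ k ∈ T.filter (fun k : ℕ+ => ¬ (k : ℕ) ≤ M), Real.exp (-(t * ((k : ℕ) : ℝ) ^ 2))
      ≤ 1 + 1 / Real.sqrt t := by
    have step1 : ∑ k ∈ T.filter (fun k : ℕ+ => ¬ (k : ℕ) ≤ M), Real.exp (-(t * ((k : ℕ) : ℝ) ^ 2))
        ≤ ∑ k ∈ T.filter (fun k : ℕ+ => ¬ (k : ℕ) ≤ M), r ^ (k : ℕ) := by
      apply Finset.sum_le_sum
      intro k hk
      simp only [Finset.mem_filter, not_le] at hk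
      have hkM : (M : ℝ) ≤ ((k : ℕ) : ℝ) := by exact_mod_cast hk.2.le
      have hrk : r ^ (k : ℕ) = Real.exp (-(t * M * (k : ℕ))) := by
        rw [hr, ← Real.exp_nat_mul]; ring_nf
      rw [hrk]
      apply Real.exp_le_exp.mpr
      have hk0 : (0 : ℝ) ≤ ((k : ℕ) : ℝ) := by positivity
      nlinarith [mul_le_mul_of_nonneg_right (mul_le_mul_of_nonneg_left hkM ht.le) hk0]
    have step2 : ∑ k ∈ T.filter (fun k : ℕ+ => ¬ (k : ℕ) ≤ M), r ^ (k : ℕ)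
        ≤ ∑' n : ℕ, r ^ n := by
      have hsumm : Summable (fun n : ℕ => r ^ n) := summable_geometric_of_lt_one hr0 hr1
      calc ∑ k ∈ T.filter (fun k : ℕ+ => ¬ (k : ℕ) ≤ M), r ^ (k : ℕ)
          = ∑ n ∈ (T.filter (fun k : ℕ+ => ¬ (k : ℕ) ≤ M)).image (fun k : ℕ+ => (k : ℕ)), r ^ n := by
            rw [Finset.sum_image]
            intro a _ b _ h; exact PNat.coe_injective h
        _ ≤ ∑' n : ℕ, r ^ n := Summable.sum_le_tsum _ (fun n _ => by positivity) hsumm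
    have hgeo : ∑' n : ℕ, r ^ n = (1 - r)⁻¹ := tsum_geometric_of_lt_one hr0 hr1
    have h1r : 0 < 1 - r := by linarith
    have key : (1 + t * M) * r ≤ 1 := by
      have hexp : t * M + 1 ≤ Real.exp (t * M) := Real.add_one_le_exp _
      have hre : r = (Real.exp (t * M))⁻¹ := by rw [hr, Real.exp_neg]
      rw [hre, mul_inv_le_iff₀ (Real.exp_pos _), one_mul]
      linarith
    have hupos : 0 < 1 / (t * M) := by positivity
    have hu : (t * M) * (1 / (t * M)) = 1 := by field_simp
    have hbound : (1 - r)⁻¹ ≤ 1 + 1 / (t * M) := by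
      rw [inv_le_iff_one_le_mul₀ h1r]
      nlinarith [mul_le_mul_of_nonneg_right key hupos.le]
    have hlast : 1 / (t * M) ≤ 1 / Real.sqrt t :=
      one_div_le_one_div_of_le hst htM
    calc ∑ k ∈ T.filter (fun k : ℕ+ => ¬ (k : ℕ) ≤ M), Real.exp (-(t * ((k : ℕ) : ℝ) ^ 2))
        ≤ (1 - r)⁻¹ := by rw [← hgeo]; exact le_trans step1 step2
      _ ≤ 1 + 1 / (t * M) := hbound
      _ ≤ 1 + 1 / Real.sqrt t := by linarith
  have hfin : (M : ℝ) + (1 + 1 / Real.sqrt t) ≤ 2 / Real.sqrt t + 2 := by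
    have h2 : 2 / Real.sqrt t = 1 / Real.sqrt t + 1 / Real.sqrt t := by ring
    linarith
  linarith


lemma aux_prodsum (y : ℕ+ → ℝ) (hy : ∀ k, 0 ≤ y k) (S : ℝ)
    (hS : ∀ T : Finset ℕ+, ∑ k ∈ T, y k ≤ S) :
    ∑' s : Finset ℕ+, ENNReal.ofReal (∏ k ∈ s, y k) ≤ ENNReal.ofReal (Real.exp S) := by
  classical
  rw [ENNReal.tsum_eq_iSup_sum]
  apply iSup_le
  intro A
  set T : Finset ℕ+ := A.sup id with hT
  have hsub : A ⊆ T.powerset := by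
    intro s hsA; rw [Finset.mem_powerset]; exact Finset.le_sup (f := id) hsA
  calc ∑ s ∈ A, ENNReal.ofReal (∏ k ∈ s, y k)
      ≤ ∑ s ∈ T.powerset, ENNReal.ofReal (∏ k ∈ s, y k) :=
        Finset.sum_le_sum_of_subset hsub
    _ = ENNReal.ofReal (∑ s ∈ T.powerset, ∏ k ∈ s, y k) := by
        rw [ENNReal.ofReal_sum_of_nonneg]
        intro s _; exact Finset.prod_nonneg fun k _ => hy k
    _ ≤ ENNReal.ofReal (Real.exp S) := by
        apply ENNReal.ofReal_le_ofReal
        have hps : ∑ s ∈ T.powerset, ∏ k ∈ s, y k = ∏ k ∈ T, (y k + 1) := by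
          rw [Finset.prod_add]; simp
        rw [hps]
        calc ∏ k ∈ T, (y k + 1)
            ≤ ∏ k ∈ T, Real.exp (y k) := by
              apply Finset.prod_le_prod (fun k _ => by have := hy k; linarith)
              intro k _
              have := Real.add_one_le_exp (y k); linarith
          _ = Real.exp (∑ k ∈ T, y k) := (Real.exp_sum _ _).symm
          _ ≤ Real.exp S := Real.exp_le_exp.mpr (hS T)

lemma aux_summable_prod (y : ℕ+ → ℝ) (hy : ∀ k, 0 ≤ y k) (S : ℝ)
    (hS : ∀ T : Finset ℕ+, ∑ k ∈ T, y k ≤ S) :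
    Summable (fun s : Finset ℕ+ => ∏ k ∈ s, y k) ∧
    ∑' s : Finset ℕ+, ∏ k ∈ s, y k ≤ Real.exp S := by
  have h1 := aux_prodsum y hy S hS
  have hne : ∑' s : Finset ℕ+, ENNReal.ofReal (∏ k ∈ s, y k) ≠ ⊤ :=
    (lt_of_le_of_lt h1 ENNReal.ofReal_lt_top).ne
  have hsum := ENNReal.summable_toReal hne
  have hcong : ∀ s : Finset ℕ+, (ENNReal.ofReal (∏ k ∈ s, y k)).toReal = ∏ k ∈ s, y k :=
    fun s => ENNReal.toReal_ofReal (Finset.prod_nonneg fun k _ => hy k)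
  constructor
  · exact hsum.congr hcong
  · have heq := ENNReal.tsum_toReal_eq (f := fun s : Finset ℕ+ => ENNReal.ofReal (∏ k ∈ s, y k))
      (fun s => ENNReal.ofReal_ne_top)
    calc ∑' s : Finset ℕ+, ∏ k ∈ s, y k
        = (∑' s : Finset ℕ+, ENNReal.ofReal (∏ k ∈ s, y k)).toReal := by
          rw [heq]; exact (tsum_congr hcong).symm
      _ ≤ (ENNReal.ofReal (Real.exp S)).toReal := ENNReal.toReal_mono ENNReal.ofReal_ne_top h1
      _ = Real.exp S := ENNReal.toReal_ofReal (Real.exp_pos S).le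

lemma main_bounds (β b C : ℝ) (hβ : 0 < β) (hb : 0 < b) (hC : 0 < C)
    (N : ℕ) (hN : 0 < N) (ε : ℕ+ → ℝ)
    (hε : ∀ k : ℕ+, |ε k - b * ((k : ℕ) : ℝ) ^ 2| ≤ C) :
    0 < canonicalZ β N (fun k => b * ((k : ℕ) : ℝ) ^ 2) ∧
    0 < canonicalZ β N ε ∧
    |Real.log (canonicalZ β N ε) -
        Real.log (canonicalZ β N (fun k => b * ((k : ℕ) : ℝ) ^ 2))| ≤ β * C * N ∧
    Real.log (canonicalZ β N (fun k => b * ((k : ℕ) : ℝ) ^ 2))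
      ≤ -(β * b / 6) * (N : ℝ) ^ 3 + (2 / Real.sqrt (β * b / 2) + 2) := by
  classical
  set t : ℝ := β * b / 2 with htdef
  have ht : 0 < t := by positivity
  set S : ℝ := 2 / Real.sqrt t + 2 with hSdef
  set y : ℕ+ → ℝ := fun k => Real.exp (-(t * ((k : ℕ) : ℝ) ^ 2)) with hydef
  have hy : ∀ k, 0 ≤ y k := fun k => (Real.exp_pos _).le
  have hS : ∀ T : Finset ℕ+, ∑ k ∈ T, y k ≤ S := fun T => aux_gauss t ht T
  obtain ⟨hPsum, hPle⟩ := aux_summable_prod y hy S hS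
  set P : Finset ℕ+ → ℝ := fun s => ∏ k ∈ s, y k with hPdef
  set ι := {s : Finset ℕ+ // s.card = N}
  set f0 : ι → ℝ := fun s => Real.exp (-β * ∑ k ∈ s.1, (b * ((k : ℕ) : ℝ) ^ 2)) with hf0def
  set f : ι → ℝ := fun s => Real.exp (-β * ∑ k ∈ s.1, ε k) with hfdef
  have hZ0def : canonicalZ β N (fun k => b * ((k : ℕ) : ℝ) ^ 2) = ∑' s : ι, f0 s := rfl
  have hZdef : canonicalZ β N ε = ∑' s : ι, f s := rfl
  -- cube bound
  have hcube : ∀ s : ι, ((N : ℝ)) ^ 3 / 3 ≤ ∑ k ∈ s.1, ((k : ℕ) : ℝ) ^ 2 := by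
    intro s
    have h := aux_cube s.1
    rw [s.2] at h
    have h' : ((N : ℝ)) ^ 3 ≤ 3 * ∑ k ∈ s.1, ((k : ℕ) : ℝ) ^ 2 := by exact_mod_cast h
    linarith
  -- key1 : f0 s ≤ exp(-(t*N^3/3)) * P s.1
  have key1 : ∀ s : ι, f0 s ≤ Real.exp (-(t * ((N : ℝ) ^ 3 / 3))) * P s.1 := by
    intro s
    have hprod : P s.1 = Real.exp (∑ k ∈ s.1, -(t * ((k : ℕ) : ℝ) ^ 2)) := by
      rw [Real.exp_sum]
    rw [hprod, ← Real.exp_add]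
    apply Real.exp_le_exp.mpr
    have h1 : ∑ k ∈ s.1, -(t * ((k : ℕ) : ℝ) ^ 2) = -(t * ∑ k ∈ s.1, ((k : ℕ) : ℝ) ^ 2) := by
      rw [Finset.mul_sum]
      exact Finset.sum_neg_distrib _
    have h2 : ∑ k ∈ s.1, (b * ((k : ℕ) : ℝ) ^ 2) = b * ∑ k ∈ s.1, ((k : ℕ) : ℝ) ^ 2 := by
      rw [Finset.mul_sum]
    rw [h1, h2]
    have hc := hcube s
    set Q : ℝ := ∑ k ∈ s.1, ((k : ℕ) : ℝ) ^ 2 with hQ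
    have h3 : -β * (b * Q) = -(t * Q) + -(t * Q) := by rw [htdef]; ring
    rw [h3]
    have h4 := mul_le_mul_of_nonneg_left hc ht.le
    linarith
  have hgsum : Summable (fun s : ι => Real.exp (-(t * ((N : ℝ) ^ 3 / 3))) * P s.1) := by
    exact (hPsum.comp_injective Subtype.coe_injective).mul_left _
  have hf0sum : Summable f0 :=
    Summable.of_nonneg_of_le (fun s => (Real.exp_pos _).le) key1 hgsum
  -- comparison between f and f0
  have habs : ∀ s : ι, |∑ k ∈ s.1, ε k - ∑ k ∈ s.1, (b * ((k : ℕ) : ℝ) ^ 2)| ≤ C * N := by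
    intro s
    rw [← Finset.sum_sub_distrib]
    calc |∑ k ∈ s.1, (ε k - b * ((k : ℕ) : ℝ) ^ 2)|
        ≤ ∑ k ∈ s.1, |ε k - b * ((k : ℕ) : ℝ) ^ 2| := Finset.abs_sum_le_sum_abs _ _
      _ ≤ ∑ k ∈ s.1, C := Finset.sum_le_sum fun k _ => hε k
      _ = C * N := by rw [Finset.sum_const, s.2, nsmul_eq_mul]; ring
  have key2a : ∀ s : ι, f s ≤ Real.exp (β * C * N) * f0 s := by
    intro s
    rw [hfdef, hf0def, ← Real.exp_add]
    apply Real.exp_le_exp.mpr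
    have h := abs_le.mp (habs s)
    have h' := mul_le_mul_of_nonneg_left h.1 hβ.le
    linarith
  have key2b : ∀ s : ι, f0 s ≤ Real.exp (β * C * N) * f s := by
    intro s
    rw [hfdef, hf0def, ← Real.exp_add]
    apply Real.exp_le_exp.mpr
    have h := abs_le.mp (habs s)
    have h' := mul_le_mul_of_nonneg_left h.2 hβ.le
    linarith
  have hfsum : Summable f :=
    Summable.of_nonneg_of_le (fun s => (Real.exp_pos _).le) key2a (hf0sum.mul_left _)
  -- positivity
  have s₀ : ι := ⟨(Finset.range N).map ⟨Nat.succPNat, Nat.succPNat_injective⟩, by simp⟩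
  have hZ0pos : 0 < ∑' s : ι, f0 s :=
    Summable.tsum_pos hf0sum (fun s => (Real.exp_pos _).le) s₀ (Real.exp_pos _)
  have hZpos : 0 < ∑' s : ι, f s :=
    Summable.tsum_pos hfsum (fun s => (Real.exp_pos _).le) s₀ (Real.exp_pos _)
  -- mutual bounds
  have hZZ0 : ∑' s : ι, f s ≤ Real.exp (β * C * N) * ∑' s : ι, f0 s := by
    calc ∑' s : ι, f s ≤ ∑' s : ι, Real.exp (β * C * N) * f0 s :=
          Summable.tsum_le_tsum key2a hfsum (hf0sum.mul_left _)
      _ = Real.exp (β * C * N) * ∑' s : ι, f0 s := tsum_mul_left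
  have hZ0Z : ∑' s : ι, f0 s ≤ Real.exp (β * C * N) * ∑' s : ι, f s := by
    calc ∑' s : ι, f0 s ≤ ∑' s : ι, Real.exp (β * C * N) * f s :=
          Summable.tsum_le_tsum key2b hf0sum (hfsum.mul_left _)
      _ = Real.exp (β * C * N) * ∑' s : ι, f s := tsum_mul_left
  -- log comparison
  have hlog1 : Real.log (∑' s : ι, f s) ≤ β * C * N + Real.log (∑' s : ι, f0 s) := by
    have h := Real.log_le_log hZpos hZZ0
    rwa [Real.log_mul (Real.exp_ne_zero _) (ne_of_gt hZ0pos), Real.log_exp] at h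
  have hlog2 : Real.log (∑' s : ι, f0 s) ≤ β * C * N + Real.log (∑' s : ι, f s) := by
    have h := Real.log_le_log hZ0pos hZ0Z
    rwa [Real.log_mul (Real.exp_ne_zero _) (ne_of_gt hZpos), Real.log_exp] at h
  -- upper bound for Z0
  have hZ0up : ∑' s : ι, f0 s ≤ Real.exp (-(t * ((N : ℝ) ^ 3 / 3)) + S) := by
    calc ∑' s : ι, f0 s
        ≤ ∑' s : ι, Real.exp (-(t * ((N : ℝ) ^ 3 / 3))) * P s.1 :=
          Summable.tsum_le_tsum key1 hf0sum hgsum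
      _ = Real.exp (-(t * ((N : ℝ) ^ 3 / 3))) * ∑' s : ι, P s.1 := tsum_mul_left
      _ ≤ Real.exp (-(t * ((N : ℝ) ^ 3 / 3))) * ∑' s : Finset ℕ+, P s := by
          apply mul_le_mul_of_nonneg_left _ (Real.exp_pos _).le
          exact Summable.tsum_le_tsum_of_inj Subtype.val Subtype.coe_injective
            (fun s _ => Finset.prod_nonneg fun k _ => hy k) (fun s => le_rfl)
            (hPsum.comp_injective Subtype.coe_injective) hPsum
      _ ≤ Real.exp (-(t * ((N : ℝ) ^ 3 / 3))) * Real.exp S :=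
          mul_le_mul_of_nonneg_left hPle (Real.exp_pos _).le
      _ = Real.exp (-(t * ((N : ℝ) ^ 3 / 3)) + S) := (Real.exp_add _ _).symm
  have hlog3 : Real.log (∑' s : ι, f0 s) ≤ -(t * ((N : ℝ) ^ 3 / 3)) + S := by
    have h := Real.log_le_log hZ0pos hZ0up
    rwa [Real.log_exp] at h
  refine ⟨hZ0pos, hZpos, ?_, ?_⟩
  · rw [hZdef, hZ0def]
    exact abs_le.mpr ⟨by linarith, by linarith⟩
  · rw [hZ0def]
    calc Real.log (∑' s : ι, f0 s) ≤ -(t * ((N : ℝ) ^ 3 / 3)) + S := hlog3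
      _ = -(β * b / 6) * (N : ℝ) ^ 3 + (2 / Real.sqrt (β * b / 2) + 2) := by
          rw [hSdef, htdef]; ring

/-- Theorem 1 of the paper: if `|ε^{(n)}_k − π²k²/Λ_n²| ≤ C`, `Λ_n → ∞` and
`N_n/Λ_n → ∞`, then `ln Z_n^{(V)} / ln Z_n^{(0)} → 1`. -/
theorem stmt_0 (β : ℝ) (hβ : 0 < β) (Λ : ℕ → ℝ) (N : ℕ → ℕ)
    (hΛpos : ∀ n, 0 < Λ n) (hNpos : ∀ n, 0 < N n)
    (hΛ : Tendsto Λ atTop atTop)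
    (hρ : Tendsto (fun n => (N n : ℝ) / Λ n) atTop atTop)
    (C : ℝ) (hC : 0 < C) (ε : ℕ → ℕ+ → ℝ)
    (hε : ∀ n, ∀ k : ℕ+, |ε n k - π ^ 2 * (k : ℕ) ^ 2 / (Λ n) ^ 2| ≤ C) :
    Tendsto (fun n =>
        Real.log (canonicalZ β (N n) (ε n)) /
        Real.log (canonicalZ β (N n) (fun k => π ^ 2 * (k : ℕ) ^ 2 / (Λ n) ^ 2)))
      atTop (nhds 1) := by
  classical
  have hπ : (1 : ℝ) < π := by have := Real.pi_gt_three; linarith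
  set b : ℕ → ℝ := fun n => π ^ 2 / (Λ n) ^ 2 with hbdef
  have hb : ∀ n, 0 < b n := fun n => by
    have := hΛpos n; positivity
  have hfree : ∀ n, (fun k : ℕ+ => π ^ 2 * ((k : ℕ) : ℝ) ^ 2 / (Λ n) ^ 2)
      = (fun k : ℕ+ => b n * ((k : ℕ) : ℝ) ^ 2) := by
    intro n; funext k; rw [hbdef]; ring
  have key := fun n => main_bounds β (b n) C hβ (hb n) hC (N n) (hNpos n) (ε n)
    (by intro k; have h := hε n k
        have heq : π ^ 2 * ((k : ℕ) : ℝ) ^ 2 / (Λ n) ^ 2 = b n * ((k : ℕ) : ℝ) ^ 2 := by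
          rw [hbdef]; ring
        rwa [heq] at h)
  set g : ℕ → ℝ := fun n => Real.log (canonicalZ β (N n) (ε n)) with hgdef
  set h : ℕ → ℝ := fun n =>
    Real.log (canonicalZ β (N n) (fun k => π ^ 2 * ((k : ℕ) : ℝ) ^ 2 / (Λ n) ^ 2)) with hhdef
  have habs : ∀ n, |g n - h n| ≤ β * C * N n := by
    intro n
    have h2 := (key n).2.2.1
    rw [← hfree n] at h2
    exact h2
  set c₀ : ℝ := 2 * Real.sqrt (2 / β) with hc₀def
  have hc₀ : 0 ≤ c₀ := by positivity
  have hsq : ∀ n, 2 / Real.sqrt (β * b n / 2) ≤ c₀ * Λ n := by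
    intro n
    have hΛn := hΛpos n
    have hx : (β * b n / 2)⁻¹ ≤ 2 / β * (Λ n) ^ 2 := by
      rw [hbdef]
      rw [inv_le_iff_one_le_mul₀ (by positivity)]
      have hπ2 : (1:ℝ) ≤ π ^ 2 := by nlinarith
      have heq : 2 / β * Λ n ^ 2 * (β * (π ^ 2 / Λ n ^ 2) / 2) = π ^ 2 := by
        field_simp
      rw [heq]; exact hπ2
    calc 2 / Real.sqrt (β * b n / 2) = 2 * Real.sqrt ((β * b n / 2)⁻¹) := by
          rw [Real.sqrt_inv, div_eq_mul_inv]
      _ ≤ 2 * Real.sqrt (2 / β * (Λ n) ^ 2) := by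
          have := Real.sqrt_le_sqrt hx
          linarith
      _ = c₀ * Λ n := by
          rw [hc₀def, Real.sqrt_mul (by positivity), Real.sqrt_sq hΛn.le]
          ring
  have hup : ∀ n, h n ≤ -(β * π ^ 2 / 6) * ((N n : ℝ) ^ 3 / (Λ n) ^ 2) + (c₀ * Λ n + 2) := by
    intro n
    have h1 := (key n).2.2.2
    have hΛn := hΛpos n
    have h3 : -(β * b n / 6) * (N n : ℝ) ^ 3
        = -(β * π ^ 2 / 6) * ((N n : ℝ) ^ 3 / (Λ n) ^ 2) := by
      simp only [hbdef]; ring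
    have h2 := hsq n
    have h4 : h n = Real.log (canonicalZ β (N n) (fun k => b n * ((k : ℕ) : ℝ) ^ 2)) := by
      simp only [hhdef]; rw [hfree n]
    rw [h4]
    calc Real.log (canonicalZ β (N n) (fun k => b n * ((k : ℕ) : ℝ) ^ 2))
        ≤ -(β * b n / 6) * (N n : ℝ) ^ 3 + (2 / Real.sqrt (β * b n / 2) + 2) := h1
      _ ≤ -(β * π ^ 2 / 6) * ((N n : ℝ) ^ 3 / (Λ n) ^ 2) + (c₀ * Λ n + 2) := by
          rw [h3]; linarith
  set ρ : ℕ → ℝ := fun n => (N n : ℝ) / Λ n with hρdef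
  have hNtop : Tendsto (fun n => (N n : ℝ)) atTop atTop := by
    have hmul := hρ.atTop_mul_atTop₀ hΛ
    apply hmul.congr
    intro n
    exact div_mul_cancel₀ _ (ne_of_gt (hΛpos n))
  set v : ℕ → ℝ := fun n => (-(h n)) / (N n : ℝ) with hvdef
  have hvtop : Tendsto v atTop atTop := by
    have hq : Tendsto (fun n => β * π ^ 2 / 6 * (ρ n * ρ n) - (c₀ + 1)) atTop atTop := by
      apply tendsto_atTop_add_const_right
      exact Tendsto.const_mul_atTop (by positivity) (hρ.atTop_mul_atTop₀ hρ)
    apply tendsto_atTop_mono' atTop _ hq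
    filter_upwards [hρ.eventually_ge_atTop 1, hNtop.eventually_ge_atTop 2] with n hρ1 hN2
    have hΛn := hΛpos n
    have hNn : (0:ℝ) < N n := by linarith
    have hupn := hup n
    have hΛN : Λ n / N n ≤ 1 := by
      rw [div_le_one hNn]
      have := (one_le_div hΛn).mp hρ1
      linarith
    have h2N : 2 / (N n : ℝ) ≤ 1 := by rw [div_le_one hNn]; linarith
    have step : (β * π ^ 2 / 6 * ((N n : ℝ) ^ 3 / (Λ n) ^ 2) - (c₀ * Λ n + 2)) / (N n : ℝ)
        ≤ v n := by
      have hv : v n = (-(h n)) / (N n : ℝ) := rfl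
      rw [hv]
      gcongr
      linarith
    have expand : (β * π ^ 2 / 6 * ((N n : ℝ) ^ 3 / (Λ n) ^ 2) - (c₀ * Λ n + 2)) / (N n : ℝ)
        = β * π ^ 2 / 6 * (ρ n * ρ n) - (c₀ * (Λ n / N n) + 2 / (N n : ℝ)) := by
      rw [hρdef]; field_simp
    rw [expand] at step
    have hmul2 : c₀ * (Λ n / N n) ≤ c₀ := by
      calc c₀ * (Λ n / N n) ≤ c₀ * 1 := mul_le_mul_of_nonneg_left hΛN hc₀
        _ = c₀ := mul_one _
    linarith
  have hev : ∀ᶠ n in atTop, dist (g n / h n) 1 ≤ β * C / v n := by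
    filter_upwards [hvtop.eventually_ge_atTop 1, hNtop.eventually_ge_atTop 1] with n hv1 hN1
    have hNn : (0:ℝ) < N n := by linarith
    have hvpos : 0 < v n := lt_of_lt_of_le one_pos hv1
    have hhneg : h n < 0 := by
      by_contra hcon
      push_neg at hcon
      have hv : v n = (-(h n)) / (N n : ℝ) := rfl
      have hv0 : v n ≤ 0 := by
        rw [hv]
        apply div_nonpos_of_nonpos_of_nonneg <;> linarith
      linarith
    have hne : h n ≠ 0 := ne_of_lt hhneg
    rw [Real.dist_eq, div_sub_one hne, abs_div, abs_of_neg hhneg]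
    have heq : β * C / v n = β * C * N n / (-(h n)) := by
      have hv : v n = (-(h n)) / (N n : ℝ) := rfl
      rw [hv, div_div_eq_mul_div]
    rw [heq]
    gcongr
    · linarith
    · exact habs n
  have hlim : Tendsto (fun n => β * C / v n) atTop (nhds 0) :=
    Tendsto.div_atTop tendsto_const_nhds hvtop
  have final : Tendsto (fun n => g n / h n) atTop (nhds 1) := by
    rw [tendsto_iff_dist_tendsto_zero]
    exact squeeze_zero' (Eventually.of_forall fun n => dist_nonneg) hev hlim
  exact final
end

section
/- Let β > 0 and Λ > 0 be fixed, let C > 0, and let ε : {1,2,...} → ℝ be a sequence satisfying |ε_k − π²k²/Λ²| ≤ C for all k ≥ 1. Define ln Ξ_μ^{(V)} = Σ_{k=1}^∞ ln(1 + e^{β(μ−ε_k)}) and ln Ξ_μ^{(0)} = Σ_{k=1}^∞ ln(1 + e^{β(μ−π²k²/Λ²)}). Then (ln Ξ_μ^{(V)})/(ln Ξ_μ^{(0)}) → 1 as μ → ∞. -/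
open Real Filter

/-- Logarithm of the grand canonical partition function of the Fermi gas with
one-particle eigenvalues `ε` and chemical potential `μ`:
`ln Ξ_μ = Σ_{k=1}^∞ ln(1 + e^{β(μ−ε_k)})`. -/
noncomputable def lnXi (β μ : ℝ) (ε : ℕ+ → ℝ) : ℝ :=
  ∑' k : ℕ+, Real.log (1 + Real.exp (β * (μ - ε k)))

private lemma hlog_nonneg (x : ℝ) : 0 ≤ Real.log (1 + Real.exp x) :=
  Real.log_nonneg (by linarith [Real.exp_pos x])

private lemma hlog_le_exp (x : ℝ) : Real.log (1 + Real.exp x) ≤ Real.exp x := by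
  have := Real.log_le_sub_one_of_pos (x := 1 + Real.exp x) (by positivity)
  linarith

private lemma hle_log (x : ℝ) : x ≤ Real.log (1 + Real.exp x) := by
  calc x = Real.log (Real.exp x) := (Real.log_exp x).symm
  _ ≤ _ := Real.log_le_log (Real.exp_pos x) (by linarith)

private lemma hlog_mono {x y : ℝ} (h : x ≤ y) :
    Real.log (1 + Real.exp x) ≤ Real.log (1 + Real.exp y) :=
  Real.log_le_log (by positivity) (by linarith [Real.exp_le_exp.2 h])

private lemma hlog_lip {x c : ℝ} (hc : 0 ≤ c) :
    Real.log (1 + Real.exp (x + c)) ≤ Real.log (1 + Real.exp x) + c := by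
  have h1 : (1:ℝ) + Real.exp (x+c) ≤ Real.exp c * (1 + Real.exp x) := by
    rw [Real.exp_add]; nlinarith [Real.one_le_exp hc, Real.exp_pos x, Real.exp_pos c]
  calc Real.log (1 + Real.exp (x+c)) ≤ Real.log (Real.exp c * (1 + Real.exp x)) :=
        Real.log_le_log (by positivity) h1
    _ = Real.log (1 + Real.exp x) + c := by
        rw [Real.log_mul (by positivity) (by positivity), Real.log_exp]; ring

private lemma summable_pnat_pow {r : ℝ} (h0 : 0 ≤ r) (h1 : r < 1) :
    Summable (fun k : ℕ+ => r ^ (k : ℕ)) :=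
  (summable_geometric_of_lt_one h0 h1).comp_injective PNat.coe_injective

private lemma tsum_pnat_pow_le {r : ℝ} (h0 : 0 ≤ r) (h1 : r < 1) :
    (∑' k : ℕ+, r ^ (k : ℕ)) ≤ (1 - r)⁻¹ := by
  calc (∑' k : ℕ+, r ^ (k : ℕ)) ≤ ∑' n : ℕ, r ^ n :=
        Summable.tsum_le_tsum_of_inj (fun k : ℕ+ => (k : ℕ)) PNat.coe_injective
          (fun c _ => pow_nonneg h0 c) (fun k => le_rfl)
          (summable_pnat_pow h0 h1) (summable_geometric_of_lt_one h0 h1)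
  _ = (1 - r)⁻¹ := tsum_geometric_of_lt_one h0 h1

/-- Summability of the terms of `lnXi` when the eigenvalues grow quadratically. -/
private lemma summable_term {β Λ C : ℝ} (hβ : 0 < β) (hΛ : 0 < Λ) (μ : ℝ) {ε : ℕ+ → ℝ}
    (hlb : ∀ k : ℕ+, π ^ 2 * (k : ℕ) ^ 2 / Λ ^ 2 - C ≤ ε k) :
    Summable (fun k : ℕ+ => Real.log (1 + Real.exp (β * (μ - ε k)))) := by
  have hπ := Real.pi_pos
  have ha0 : 0 < β * π ^ 2 / Λ ^ 2 := by positivity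
  set a := β * π ^ 2 / Λ ^ 2 with ha
  have hr0 : 0 ≤ Real.exp (-a) := (Real.exp_pos _).le
  have hr1 : Real.exp (-a) < 1 := Real.exp_lt_one_iff.2 (by linarith)
  refine Summable.of_nonneg_of_le (fun k => hlog_nonneg _)
    (f := fun k : ℕ+ => Real.exp (β * (μ + C)) * Real.exp (-a) ^ (k : ℕ)) ?_
    ((summable_pnat_pow hr0 hr1).mul_left _)
  intro k
  have hk1 : (1:ℝ) ≤ ((k : ℕ) : ℝ) := by exact_mod_cast k.one_le
  have hk2 : ((k : ℕ) : ℝ) ≤ ((k : ℕ) : ℝ) ^ 2 := by nlinarith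
  calc Real.log (1 + Real.exp (β * (μ - ε k))) ≤ Real.exp (β * (μ - ε k)) := hlog_le_exp _
  _ ≤ Real.exp (β * (μ + C)) * Real.exp (-a) ^ (k : ℕ) := by
      rw [← Real.exp_nat_mul, ← Real.exp_add]
      apply Real.exp_le_exp.2
      have e1 : β * (π ^ 2 * (k : ℕ) ^ 2 / Λ ^ 2 - C) ≤ β * ε k :=
        mul_le_mul_of_nonneg_left (hlb k) hβ.le
      have e2 : β * (π ^ 2 * ((k : ℕ) : ℝ) ^ 2 / Λ ^ 2) = a * ((k : ℕ) : ℝ) ^ 2 := by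
        rw [ha]; field_simp
      have e3 : a * ((k : ℕ) : ℝ) ≤ a * ((k : ℕ) : ℝ) ^ 2 :=
        mul_le_mul_of_nonneg_left hk2 ha0.le
      nlinarith

private lemma lnXi_le {β : ℝ} (hβ : 0 < β) {μ1 μ2 : ℝ} {ε1 ε2 : ℕ+ → ℝ}
    (h : ∀ k, μ1 - ε1 k ≤ μ2 - ε2 k)
    (h1 : Summable (fun k : ℕ+ => Real.log (1 + Real.exp (β * (μ1 - ε1 k)))))
    (h2 : Summable (fun k : ℕ+ => Real.log (1 + Real.exp (β * (μ2 - ε2 k))))) :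
    lnXi β μ1 ε1 ≤ lnXi β μ2 ε2 :=
  Summable.tsum_le_tsum (fun k => hlog_mono (mul_le_mul_of_nonneg_left (h k) hβ.le)) h1 h2

/-- Lower bound: `g(μ) ≥ n · βμ/2` when `n ≤ Λ√μ/(2π)`. -/
private lemma g_lower {β Λ : ℝ} (hβ : 0 < β) (hΛ : 0 < Λ) (μ : ℝ) (hμ : 0 ≤ μ) (n : ℕ)
    (hn1 : 1 ≤ n) (hn : (n : ℝ) ≤ Λ * Real.sqrt μ / (2 * π))
    (hsum : Summable (fun k : ℕ+ =>
      Real.log (1 + Real.exp (β * (μ - π ^ 2 * (k : ℕ) ^ 2 / Λ ^ 2))))) :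
    (n : ℝ) * (β * μ / 2) ≤ lnXi β μ (fun k => π ^ 2 * (k : ℕ) ^ 2 / Λ ^ 2) := by
  have hπ := Real.pi_pos
  set N : ℕ+ := ⟨n, by omega⟩ with hN
  have hcard : (Finset.Icc (1 : ℕ+) N).card = n := by
    rw [PNat.card_Icc]; simp [hN]
  have hterm : ∀ k ∈ Finset.Icc (1 : ℕ+) N,
      β * μ / 2 ≤ Real.log (1 + Real.exp (β * (μ - π ^ 2 * (k : ℕ) ^ 2 / Λ ^ 2))) := by
    intro k hk
    have hkN : (k : ℕ) ≤ n := by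
      have := (Finset.mem_Icc.1 hk).2
      exact_mod_cast this
    have hkr : ((k : ℕ) : ℝ) ≤ (n : ℝ) := by exact_mod_cast hkN
    have hk0 : (0:ℝ) ≤ ((k : ℕ) : ℝ) := by positivity
    -- n ≤ Λ√μ/(2π)  ⇒  π² n²/Λ² ≤ μ/4
    have hs2 : Real.sqrt μ ^ 2 = μ := Real.sq_sqrt hμ
    have hsq : (n : ℝ) ^ 2 ≤ (Λ * Real.sqrt μ / (2 * π)) ^ 2 := by
      apply sq_le_sq' _ hn
      have : (0:ℝ) ≤ (n:ℝ) := by positivity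
      linarith
    have hε0 : π ^ 2 * ((k : ℕ) : ℝ) ^ 2 / Λ ^ 2 ≤ μ / 4 := by
      have hk2 : ((k : ℕ) : ℝ) ^ 2 ≤ (n : ℝ) ^ 2 := by nlinarith
      have h1 : π ^ 2 * ((k : ℕ) : ℝ) ^ 2 / Λ ^ 2 ≤ π ^ 2 * (n : ℝ) ^ 2 / Λ ^ 2 := by
        apply div_le_div_of_nonneg_right _ (by positivity)
        · nlinarith
      have h2 : (Λ * Real.sqrt μ / (2 * π)) ^ 2 = Λ ^ 2 * μ / (4 * π ^ 2) := by
        rw [div_pow, mul_pow, hs2]; ring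
      have h4 : (n : ℝ) ^ 2 ≤ Λ ^ 2 * μ / (4 * π ^ 2) := by rw [← h2]; exact hsq
      have h5 : (n : ℝ) ^ 2 * (4 * π ^ 2) ≤ Λ ^ 2 * μ := (le_div_iff₀ (by positivity)).1 h4
      have h3 : π ^ 2 * (n : ℝ) ^ 2 / Λ ^ 2 ≤ μ / 4 := by
        rw [div_le_div_iff₀ (by positivity) (by norm_num)]
        nlinarith [h5]
      linarith
    calc β * μ / 2 ≤ β * (μ - π ^ 2 * ((k : ℕ) : ℝ) ^ 2 / Λ ^ 2) := by nlinarith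
    _ ≤ _ := hle_log _
  calc (n : ℝ) * (β * μ / 2)
      = (Finset.Icc (1 : ℕ+) N).card • (β * μ / 2) := by rw [hcard, nsmul_eq_mul]
  _ ≤ ∑ k ∈ Finset.Icc (1 : ℕ+) N,
        Real.log (1 + Real.exp (β * (μ - π ^ 2 * (k : ℕ) ^ 2 / Λ ^ 2))) :=
      Finset.card_nsmul_le_sum _ _ _ hterm
  _ ≤ lnXi β μ (fun k => π ^ 2 * (k : ℕ) ^ 2 / Λ ^ 2) :=
      Summable.sum_le_tsum _ (fun k _ => hlog_nonneg _) hsum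

/-- Upper bound on the increment `g(μ+C) - g(μ) ≤ βC(K+1) + D` provided
`β(μ+C) ≤ a K²` with `a = βπ²/Λ²`. -/
private lemma g_diff_upper {β Λ C : ℝ} (hβ : 0 < β) (hΛ : 0 < Λ) (hC : 0 < C) (μ : ℝ) (K : ℕ)
    (hK : β * (μ + C) ≤ (β * π ^ 2 / Λ ^ 2) * (K : ℝ) ^ 2)
    (h1 : Summable (fun k : ℕ+ =>
      Real.log (1 + Real.exp (β * ((μ + C) - π ^ 2 * (k : ℕ) ^ 2 / Λ ^ 2)))))
    (h2 : Summable (fun k : ℕ+ =>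
      Real.log (1 + Real.exp (β * (μ - π ^ 2 * (k : ℕ) ^ 2 / Λ ^ 2))))) :
    lnXi β (μ + C) (fun k => π ^ 2 * (k : ℕ) ^ 2 / Λ ^ 2)
      - lnXi β μ (fun k => π ^ 2 * (k : ℕ) ^ 2 / Λ ^ 2)
      ≤ β * C * ((K : ℝ) + 1) + (1 - Real.exp (-(β * π ^ 2 / Λ ^ 2)))⁻¹ := by
  have hπ := Real.pi_pos
  have ha0 : 0 < β * π ^ 2 / Λ ^ 2 := by positivity
  set a := β * π ^ 2 / Λ ^ 2 with ha
  have hr0 : 0 ≤ Real.exp (-a) := (Real.exp_pos _).le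
  have hr1 : Real.exp (-a) < 1 := Real.exp_lt_one_iff.2 (by linarith)
  set ind : ℕ+ → ℝ := fun k => if (k : ℕ) ≤ K then β * C else 0 with hind
  set m : ℕ+ → ℝ := fun k => ind k + Real.exp (-a) ^ (k : ℕ) with hm
  have hindsupp : ∀ b ∉ Finset.Icc (1 : ℕ+) ⟨K + 1, Nat.succ_pos K⟩, ind b = 0 := by
    intro b hb
    rw [hind]
    simp only
    rw [if_neg]
    intro hbK
    exact hb (Finset.mem_Icc.2 ⟨b.one_le, by
      exact (PNat.coe_le_coe _ _).1 (Nat.le_succ_of_le hbK)⟩)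
  have hindsum : Summable ind := summable_of_ne_finset_zero hindsupp
  have hpowsum : Summable (fun k : ℕ+ => Real.exp (-a) ^ (k : ℕ)) := summable_pnat_pow hr0 hr1
  have hms : Summable m := hindsum.add hpowsum
  have hdiffle : ∀ k : ℕ+,
      Real.log (1 + Real.exp (β * ((μ + C) - π ^ 2 * (k : ℕ) ^ 2 / Λ ^ 2)))
        - Real.log (1 + Real.exp (β * (μ - π ^ 2 * (k : ℕ) ^ 2 / Λ ^ 2))) ≤ m k := by
    intro k
    have hk1 : (1:ℝ) ≤ ((k : ℕ) : ℝ) := by exact_mod_cast k.one_le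
    by_cases hk : (k : ℕ) ≤ K
    · have harg : β * ((μ + C) - π ^ 2 * (k : ℕ) ^ 2 / Λ ^ 2)
          = β * (μ - π ^ 2 * (k : ℕ) ^ 2 / Λ ^ 2) + β * C := by ring
      have := hlog_lip (x := β * (μ - π ^ 2 * (k : ℕ) ^ 2 / Λ ^ 2)) (c := β * C)
        (by positivity)
      have hmk : m k = β * C + Real.exp (-a) ^ (k : ℕ) := by
        rw [hm, hind]; simp [hk]
      have hp : 0 ≤ Real.exp (-a) ^ (k : ℕ) := pow_nonneg hr0 _
      rw [harg, hmk]; linarith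
    · push_neg at hk
      have hkr : (K : ℝ) + 1 ≤ ((k : ℕ) : ℝ) := by exact_mod_cast hk
      have e2 : β * (π ^ 2 * ((k : ℕ) : ℝ) ^ 2 / Λ ^ 2) = a * ((k : ℕ) : ℝ) ^ 2 := by
        rw [ha]; field_simp
      have key : β * ((μ + C) - π ^ 2 * ((k : ℕ) : ℝ) ^ 2 / Λ ^ 2)
          ≤ ((k : ℕ) : ℝ) * (-a) := by
        have hkk : (K : ℝ) ^ 2 ≤ ((k : ℕ) : ℝ) ^ 2 - ((k : ℕ) : ℝ) := by nlinarith
        nlinarith [mul_le_mul_of_nonneg_left hkk ha0.le]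
      have hlog0 := hlog_nonneg (β * (μ - π ^ 2 * (k : ℕ) ^ 2 / Λ ^ 2))
      have hub : Real.log (1 + Real.exp (β * ((μ + C) - π ^ 2 * (k : ℕ) ^ 2 / Λ ^ 2)))
          ≤ Real.exp (-a) ^ (k : ℕ) := by
        calc _ ≤ Real.exp (β * ((μ + C) - π ^ 2 * (k : ℕ) ^ 2 / Λ ^ 2)) := hlog_le_exp _
        _ ≤ Real.exp (((k : ℕ) : ℝ) * (-a)) := Real.exp_le_exp.2 key
        _ = Real.exp (-a) ^ (k : ℕ) := Real.exp_nat_mul _ _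
      have hi0 : 0 ≤ ind k := by rw [hind]; dsimp only; split <;> positivity
      have hmk : ind k + Real.exp (-a) ^ (k : ℕ) = m k := by rw [hm]
      linarith [hmk ▸ le_refl (m k)]
  have hstep : lnXi β (μ + C) (fun k => π ^ 2 * (k : ℕ) ^ 2 / Λ ^ 2)
      - lnXi β μ (fun k => π ^ 2 * (k : ℕ) ^ 2 / Λ ^ 2) ≤ ∑' k : ℕ+, m k := by
    rw [lnXi, lnXi, ← Summable.tsum_sub h1 h2]
    exact Summable.tsum_le_tsum hdiffle (h1.sub h2) hms
  have hcard : (Finset.Icc (1 : ℕ+) ⟨K + 1, Nat.succ_pos K⟩).card = K + 1 := by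
    exact (PNat.card_Icc _ _).trans (by simp)
  have hindbound : (∑' k : ℕ+, ind k) ≤ β * C * ((K : ℝ) + 1) := by
    rw [tsum_eq_sum hindsupp]
    have hle : ∑ k ∈ Finset.Icc (1 : ℕ+) ⟨K + 1, Nat.succ_pos K⟩, ind k
        ≤ (Finset.Icc (1 : ℕ+) ⟨K + 1, Nat.succ_pos K⟩).card • (β * C) := by
      apply Finset.sum_le_card_nsmul
      intro x _
      rw [hind]; dsimp only; split
      · exact le_rfl
      · positivity
    rw [hcard, nsmul_eq_mul] at hle
    push_cast at hle
    linarith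
  have hpowbound : (∑' k : ℕ+, Real.exp (-a) ^ (k : ℕ)) ≤ (1 - Real.exp (-a))⁻¹ :=
    tsum_pnat_pow_le hr0 hr1
  have : (∑' k : ℕ+, m k) = (∑' k : ℕ+, ind k) + ∑' k : ℕ+, Real.exp (-a) ^ (k : ℕ) :=
    Summable.tsum_add hindsum hpowsum
  linarith

private lemma g_pos {β Λ C : ℝ} (hβ : 0 < β) (hΛ : 0 < Λ) (hC : 0 < C) (μ : ℝ) :
    0 < lnXi β μ (fun k => π ^ 2 * (k : ℕ) ^ 2 / Λ ^ 2) := by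
  refine Summable.tsum_pos (summable_term hβ hΛ (C := C) μ (fun k => by linarith))
    (fun k => hlog_nonneg _) 1 ?_
  exact Real.log_pos (by linarith [Real.exp_pos (β * (μ - π ^ 2 * ((1:ℕ+) : ℕ) ^ 2 / Λ ^ 2))])

set_option maxHeartbeats 1000000 in
private lemma ratio_tendsto {β Λ C : ℝ} (hβ : 0 < β) (hΛ : 0 < Λ) (hC : 0 < C) :
    Tendsto (fun μ => lnXi β (μ + C) (fun k => π ^ 2 * (k : ℕ) ^ 2 / Λ ^ 2)
      / lnXi β μ (fun k => π ^ 2 * (k : ℕ) ^ 2 / Λ ^ 2)) atTop (nhds 1) := by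
  have hπ := Real.pi_pos
  have ha0 : 0 < β * π ^ 2 / Λ ^ 2 := by positivity
  set a := β * π ^ 2 / Λ ^ 2 with ha
  have hr1 : Real.exp (-a) < 1 := Real.exp_lt_one_iff.2 (by linarith)
  set D : ℝ := (1 - Real.exp (-a))⁻¹ with hD
  have h1a : 0 < 1 - Real.exp (-a) := by linarith
  have hD0 : 0 < D := by rw [hD]; exact inv_pos.2 h1a
  have hsum : ∀ μ' : ℝ, Summable (fun k : ℕ+ =>
      Real.log (1 + Real.exp (β * (μ' - π ^ 2 * (k : ℕ) ^ 2 / Λ ^ 2)))) :=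
    fun μ' => summable_term hβ hΛ (C := C) μ' (fun k => by linarith)
  have gpos : ∀ μ' : ℝ, 0 < lnXi β μ' (fun k => π ^ 2 * (k : ℕ) ^ 2 / Λ ^ 2) :=
    fun μ' => g_pos hβ hΛ hC μ'
  set c : ℝ := 8 * C + 2 * D / β with hc
  have hc0 : 0 < c := by rw [hc]; positivity
  apply tendsto_of_tendsto_of_tendsto_of_le_of_le' (g := fun _ : ℝ => (1:ℝ))
    (h := fun μ : ℝ => 1 + c / μ)
  · exact tendsto_const_nhds
  · have h0 : Tendsto (fun μ : ℝ => c / μ) atTop (nhds 0) :=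
      tendsto_const_nhds.div_atTop tendsto_id
    simpa using tendsto_const_nhds.add h0
  · filter_upwards with μ
    exact (one_le_div (gpos μ)).2 (lnXi_le hβ (fun k => by linarith) (hsum μ) (hsum (μ + C)))
  · filter_upwards [eventually_ge_atTop (max (max 1 ((10 * π / Λ) ^ 2)) (3 * C))] with μ hμ
    have hμ1 : (1:ℝ) ≤ μ := le_trans (le_max_left _ _) (le_trans (le_max_left _ _) hμ)
    have hμ2 : (10 * π / Λ) ^ 2 ≤ μ := le_trans (le_max_right _ _) (le_trans (le_max_left _ _) hμ)
    have hμ3 : 3 * C ≤ μ := le_trans (le_max_right _ _) hμ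
    have hμ0 : (0:ℝ) ≤ μ := by linarith
    have hμpos : (0:ℝ) < μ := by linarith
    set s : ℝ := Λ * Real.sqrt μ / π with hs
    have hsqrt : 10 * π / Λ ≤ Real.sqrt μ := (Real.le_sqrt (by positivity) hμ0).2 hμ2
    have hs10 : 10 ≤ s := by
      rw [hs, le_div_iff₀ hπ]
      have : Λ * (10 * π / Λ) = 10 * π := by field_simp
      nlinarith [mul_le_mul_of_nonneg_left hsqrt hΛ.le]
    have hss : s ^ 2 = Λ ^ 2 * μ / π ^ 2 := by
      rw [hs, div_pow, mul_pow, Real.sq_sqrt hμ0]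
    set n : ℕ := ⌊s / 2⌋₊ with hn
    have hshalf : s / 2 = Λ * Real.sqrt μ / (2 * π) := by rw [hs]; ring
    have hnle : (n : ℝ) ≤ s / 2 := Nat.floor_le (by linarith)
    have hnlt : s / 2 < (n : ℝ) + 1 := Nat.lt_floor_add_one _
    have hn1 : 1 ≤ n := Nat.le_floor (by push_cast; linarith)
    have hn1r : (1:ℝ) ≤ (n : ℝ) := by exact_mod_cast hn1
    have hn25 : 2 * s / 5 ≤ (n : ℝ) := by linarith
    have hnn : (0:ℝ) ≤ (n : ℝ) := by linarith
    have hglow := g_lower hβ hΛ μ hμ0 n hn1 (by rw [← hshalf]; exact hnle) (hsum μ)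
    have has2 : a * s ^ 2 = β * μ := by rw [ha, hss]; field_simp
    have hK : β * (μ + C) ≤ a * ((3 * n : ℕ) : ℝ) ^ 2 := by
      push_cast
      have hn2 : 4 * s ^ 2 / 25 ≤ (n : ℝ) ^ 2 := by nlinarith
      have h36 : 36 / 25 * (β * μ) ≤ a * (9 * (n : ℝ) ^ 2) := by
        nlinarith [mul_le_mul_of_nonneg_left hn2 ha0.le]
      have hβC : β * C ≤ 11 / 25 * (β * μ) := by nlinarith
      nlinarith
    have hdiff := g_diff_upper hβ hΛ hC μ (3 * n) hK (hsum (μ + C)) (hsum μ)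
    rw [← ha, ← hD] at hdiff
    push_cast at hdiff
    rw [div_le_iff₀ (gpos μ)]
    have hq : c / μ * ((n : ℝ) * (β * μ / 2)) = 4 * β * C * (n : ℝ) + D * (n : ℝ) := by
      rw [hc]; field_simp; ring
    have hmono : c / μ * ((n : ℝ) * (β * μ / 2)) ≤ c / μ * lnXi β μ (fun k => π ^ 2 * (k : ℕ) ^ 2 / Λ ^ 2) :=
      mul_le_mul_of_nonneg_left hglow (by positivity)
    nlinarith [hdiff, hq, hmono, hn1r, hD0, mul_pos hβ hC]

/-- Theorem 2 of the paper: for fixed `Λ` and eigenvalues within `C` of the free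
Dirichlet eigenvalues `π²k²/Λ²`, `ln Ξ_μ^{(V)} / ln Ξ_μ^{(0)} → 1` as `μ → ∞`. -/
theorem stmt_1 (β Λ : ℝ) (hβ : 0 < β) (hΛ : 0 < Λ) (C : ℝ) (hC : 0 < C)
    (ε : ℕ+ → ℝ) (hε : ∀ k : ℕ+, |ε k - π ^ 2 * (k : ℕ) ^ 2 / Λ ^ 2| ≤ C) :
    Tendsto (fun μ =>
        lnXi β μ ε / lnXi β μ (fun k => π ^ 2 * (k : ℕ) ^ 2 / Λ ^ 2))
      atTop (nhds 1) := by
  have hεlb : ∀ k : ℕ+, π ^ 2 * (k : ℕ) ^ 2 / Λ ^ 2 - C ≤ ε k := by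
    intro k; have := (abs_le.1 (hε k)).1; linarith
  have hεub : ∀ k : ℕ+, ε k ≤ π ^ 2 * (k : ℕ) ^ 2 / Λ ^ 2 + C := by
    intro k; have := (abs_le.1 (hε k)).2; linarith
  have hsum0 : ∀ μ' : ℝ, Summable (fun k : ℕ+ =>
      Real.log (1 + Real.exp (β * (μ' - π ^ 2 * (k : ℕ) ^ 2 / Λ ^ 2)))) :=
    fun μ' => summable_term hβ hΛ (C := C) μ' (fun k => by linarith)
  have hsumε : ∀ μ' : ℝ, Summable (fun k : ℕ+ =>
      Real.log (1 + Real.exp (β * (μ' - ε k)))) :=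
    fun μ' => summable_term hβ hΛ (C := C) μ' hεlb
  have gpos : ∀ μ' : ℝ, 0 < lnXi β μ' (fun k => π ^ 2 * (k : ℕ) ^ 2 / Λ ^ 2) :=
    fun μ' => g_pos hβ hΛ hC μ'
  have hR := ratio_tendsto hβ hΛ hC
  -- lower comparison function tends to 1
  have hcomp : Tendsto (fun μ : ℝ => μ - C) atTop atTop := by
    simpa [sub_eq_add_neg] using tendsto_atTop_add_const_right atTop (-C) tendsto_id
  have h1 := hR.comp hcomp
  have h2 := h1.inv₀ one_ne_zero
  rw [inv_one] at h2
  have hL : Tendsto (fun μ : ℝ =>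
      lnXi β (μ - C) (fun k => π ^ 2 * (k : ℕ) ^ 2 / Λ ^ 2)
        / lnXi β μ (fun k => π ^ 2 * (k : ℕ) ^ 2 / Λ ^ 2)) atTop (nhds 1) := by
    refine h2.congr (fun μ => ?_)
    simp only [Function.comp]
    rw [sub_add_cancel, inv_div]
  apply tendsto_of_tendsto_of_tendsto_of_le_of_le' hL hR
  · filter_upwards with μ
    exact (div_le_div_iff_of_pos_right (gpos μ)).2
      (lnXi_le hβ (fun k => by have := hεub k; linarith) (hsum0 (μ - C)) (hsumε μ))
  · filter_upwards with μ
    exact (div_le_div_iff_of_pos_right (gpos μ)).2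
      (lnXi_le hβ (fun k => by have := hεlb k; linarith) (hsumε μ) (hsum0 (μ + C)))
end

section
/- Let β > 0, let Λ > 0, and let N be a positive integer with N > Λ. Define Z_N^{(0)}(Λ) = Σ_{0<k_1<...<k_N} exp(−β Σ_{i=1}^N π²k_i²/Λ²), the sum over strictly increasing N-tuples of positive integers. Then Z_N^{(0)}(Λ) ≤ (1/N!) (Λ/β)^N (1 + e^β β N/Λ)^Λ. -/
open Real Filter

/-- Free canonical partition function of `N` Fermi particles in `[0,Λ]` with Dirichlet
boundary conditions: `Z_N^{(0)}(Λ) = Σ_{0<k_1<...<k_N} exp(−β Σ_i π²k_i²/Λ²)`. -/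
noncomputable def freeZ (β Λ : ℝ) (N : ℕ) : ℝ :=
  ∑' s : {s : Finset ℕ+ // s.card = N},
    Real.exp (-β * ∑ k ∈ s.1, π ^ 2 * (k : ℕ) ^ 2 / Λ ^ 2)

/-- Geometric-type bound: sum of `exp (-(b k))` over any finset of positive naturals. -/
lemma pnat_geom_sum_le {b : ℝ} (hb : 0 < b) (T : Finset ℕ+) :
    ∑ k ∈ T, Real.exp (-(b * ((k : ℕ) : ℝ))) ≤ 1 / b := by
  set r : ℝ := Real.exp (-b) with hr
  have hr0 : 0 ≤ r := (Real.exp_pos _).le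
  have hr1 : r < 1 := Real.exp_lt_one_iff.mpr (by linarith)
  have hterm : ∀ k : ℕ+, Real.exp (-(b * ((k : ℕ) : ℝ))) = r ^ (k : ℕ) := by
    intro k
    rw [hr, ← Real.exp_nat_mul]
    ring_nf
  set K : ℕ := (T.sup fun k => (k : ℕ)) + 1 with hK
  have himg : ∑ k ∈ T, Real.exp (-(b * ((k : ℕ) : ℝ)))
      = ∑ n ∈ T.image (fun k : ℕ+ => (k : ℕ)), r ^ n := by
    rw [Finset.sum_image (fun x _ y _ h => PNat.coe_injective h)]
    exact Finset.sum_congr rfl fun k _ => hterm k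
  have hsub : T.image (fun k : ℕ+ => (k : ℕ)) ⊆ (Finset.range K).erase 0 := by
    intro n hn
    simp only [Finset.mem_image] at hn
    obtain ⟨k, hk, rfl⟩ := hn
    exact Finset.mem_erase.mpr ⟨k.pos.ne', Finset.mem_range.mpr (Nat.lt_succ_of_le (Finset.le_sup hk))⟩
  have h1 : ∑ n ∈ T.image (fun k : ℕ+ => (k : ℕ)), r ^ n
      ≤ ∑ n ∈ (Finset.range K).erase 0, r ^ n :=
    Finset.sum_le_sum_of_subset_of_nonneg hsub (fun n _ _ => pow_nonneg hr0 n)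
  have h2 : ∑ n ∈ (Finset.range K).erase 0, r ^ n + 1 = ∑ n ∈ Finset.range K, r ^ n := by
    have h0K : (0 : ℕ) ∈ Finset.range K := Finset.mem_range.mpr (Nat.succ_pos _)
    simpa using Finset.sum_erase_add (Finset.range K) (fun n => r ^ n) h0K
  have h3 : ∑ n ∈ Finset.range K, r ^ n ≤ 1 / (1 - r) := by
    rw [geom_sum_eq hr1.ne K]
    have hpos : (0:ℝ) < 1 - r := by linarith
    rw [show (r ^ K - 1)/(r - 1) = (1 - r ^ K)/(1 - r) by
      rw [div_eq_div_iff (by linarith) (by linarith)]; ring]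
    rw [div_le_div_iff₀ hpos hpos]
    nlinarith [pow_nonneg hr0 K]
  have hfinal : r / (1 - r) ≤ 1 / b := by
    rw [div_le_div_iff₀ (by linarith) hb]
    have hexp : (b + 1) * r ≤ 1 := by
      have h4 : b + 1 ≤ Real.exp b := Real.add_one_le_exp b
      have h5 : Real.exp b * r = 1 := by
        rw [hr, ← Real.exp_add]; simp
      nlinarith [Real.exp_pos b]
    nlinarith
  have : ∑ k ∈ T, Real.exp (-(b * ((k : ℕ) : ℝ))) ≤ 1 / (1 - r) - 1 := by
    rw [himg]; linarith
  have heq : (1:ℝ) / (1 - r) - 1 = r / (1 - r) := by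
    rw [div_sub' (by linarith : (1:ℝ) - r ≠ 0)]
    ring_nf
  linarith [h1, h2, h3]

/-- Crude Gaussian-sum bound. -/
lemma pnat_gauss_sum_le {b : ℝ} (hb : 0 < b) (T : Finset ℕ+) :
    ∑ k ∈ T, Real.exp (-(b * ((k : ℕ) : ℝ) ^ 2)) ≤ 1 + 2 / Real.sqrt b := by
  have hsb : 0 < Real.sqrt b := Real.sqrt_pos.mpr hb
  set L : ℕ := ⌈1 / Real.sqrt b⌉₊ with hLdef
  have hLlow : 1 / Real.sqrt b ≤ (L : ℝ) := Nat.le_ceil _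
  have hLhi : (L : ℝ) ≤ 1 / Real.sqrt b + 1 :=
    (Nat.ceil_lt_add_one (by positivity)).le
  set p : ℕ+ → Prop := fun k => (k : ℕ) ≤ L with hp
  have hdec : DecidablePred p := fun k => inferInstanceAs (Decidable ((k:ℕ) ≤ L))
  have hpart1 : ∑ k ∈ T.filter p, Real.exp (-(b * ((k : ℕ) : ℝ) ^ 2)) ≤ (L : ℝ) := by
    calc ∑ k ∈ T.filter p, Real.exp (-(b * ((k : ℕ) : ℝ) ^ 2))
        ≤ ∑ _k ∈ T.filter p, (1 : ℝ) := by
          refine Finset.sum_le_sum fun k _ => ?_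
          rw [Real.exp_le_one_iff]
          have : (0:ℝ) ≤ ((k : ℕ) : ℝ) ^ 2 := by positivity
          nlinarith
      _ = ((T.filter p).card : ℝ) := by simp
      _ ≤ (L : ℝ) := by
          have hcard : (T.filter p).card ≤ L := by
            rw [← Finset.card_image_of_injective (T.filter p) PNat.coe_injective]
            have hsub : (T.filter p).image (fun k : ℕ+ => (k : ℕ)) ⊆ Finset.Icc 1 L := by
              intro n hn
              simp only [Finset.mem_image, Finset.mem_filter] at hn
              obtain ⟨k, ⟨_, hk2⟩, rfl⟩ := hn
              exact Finset.mem_Icc.mpr ⟨k.one_le, hk2⟩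
            calc _ ≤ (Finset.Icc 1 L).card := Finset.card_le_card hsub
              _ = L := by rw [Nat.card_Icc]; omega
          exact_mod_cast hcard
  have hpart2 : ∑ k ∈ T.filter (fun k => ¬ p k), Real.exp (-(b * ((k : ℕ) : ℝ) ^ 2))
      ≤ 1 / Real.sqrt b := by
    have hL0 : (0:ℝ) < (L:ℝ) := lt_of_lt_of_le (by positivity) hLlow
    have hbL : 0 < b * (L : ℝ) := by positivity
    calc ∑ k ∈ T.filter (fun k => ¬ p k), Real.exp (-(b * ((k : ℕ) : ℝ) ^ 2))
        ≤ ∑ k ∈ T.filter (fun k => ¬ p k), Real.exp (-((b * (L:ℝ)) * ((k : ℕ) : ℝ))) := by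
          refine Finset.sum_le_sum fun k hk => ?_
          simp only [Finset.mem_filter, hp, not_le] at hk
          have hkL : (L : ℝ) ≤ ((k : ℕ) : ℝ) := by exact_mod_cast hk.2.le
          have hk0 : (0:ℝ) ≤ ((k : ℕ) : ℝ) := by positivity
          apply Real.exp_le_exp.mpr
          have h1 : (L:ℝ) * ((k:ℕ):ℝ) ≤ ((k:ℕ):ℝ) * ((k:ℕ):ℝ) :=
            mul_le_mul_of_nonneg_right hkL hk0
          nlinarith
      _ ≤ 1 / (b * (L : ℝ)) := pnat_geom_sum_le hbL _
      _ ≤ 1 / Real.sqrt b := by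
          apply one_div_le_one_div_of_le hsb
          calc Real.sqrt b = b / Real.sqrt b := by
                rw [eq_div_iff hsb.ne']
                exact Real.mul_self_sqrt hb.le
            _ = b * (1 / Real.sqrt b) := by ring
            _ ≤ b * (L : ℝ) := mul_le_mul_of_nonneg_left hLlow hb.le
  calc ∑ k ∈ T, Real.exp (-(b * ((k : ℕ) : ℝ) ^ 2))
      = ∑ k ∈ T.filter p, Real.exp (-(b * ((k : ℕ) : ℝ) ^ 2))
        + ∑ k ∈ T.filter (fun k => ¬ p k), Real.exp (-(b * ((k : ℕ) : ℝ) ^ 2)) :=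
      (Finset.sum_filter_add_sum_filter_not T p _).symm
    _ ≤ (L:ℝ) + 1 / Real.sqrt b := add_le_add hpart1 hpart2
    _ ≤ 1 + 2 / Real.sqrt b := by
        have : 2 / Real.sqrt b = 1 / Real.sqrt b + 1 / Real.sqrt b := by ring
        linarith

/-- Multinomial-type bound: the sum over `n`-subsets of products is at most `(∑ x)^n / n!`. -/
lemma sum_powersetCard_prod_le (x : ℕ+ → ℝ) (hx : ∀ k, 0 ≤ x k) :
    ∀ (n : ℕ) (T : Finset ℕ+),
      (n.factorial : ℝ) * ∑ s ∈ T.powersetCard n, ∏ k ∈ s, x k ≤ (∑ k ∈ T, x k) ^ n := by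
  intro n
  induction n with
  | zero => intro T; simp
  | succ n ih =>
    intro T
    have hT0 : 0 ≤ ∑ k ∈ T, x k := Finset.sum_nonneg fun k _ => hx k
    have key : ((n : ℝ) + 1) * ∑ s ∈ T.powersetCard (n+1), ∏ k ∈ s, x k
        ≤ (∑ k ∈ T, x k) * ∑ s ∈ T.powersetCard n, ∏ k ∈ s, x k := by
      have e1 : ((n : ℝ) + 1) * ∑ s ∈ T.powersetCard (n+1), ∏ k ∈ s, x k
          = ∑ s ∈ T.powersetCard (n+1), ∑ k ∈ s, x k * ∏ j ∈ s.erase k, x j := by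
        rw [Finset.mul_sum]
        refine Finset.sum_congr rfl fun s hs => ?_
        have hcard : s.card = n + 1 := (Finset.mem_powersetCard.mp hs).2
        have e2 : ∀ k ∈ s, x k * ∏ j ∈ s.erase k, x j = ∏ j ∈ s, x j :=
          fun k hk => Finset.mul_prod_erase s x hk
        rw [Finset.sum_congr rfl e2, Finset.sum_const, hcard, nsmul_eq_mul]
        push_cast
        ring
      have e3 : ∑ s ∈ T.powersetCard (n+1), ∑ k ∈ s, x k * ∏ j ∈ s.erase k, x j
          = ∑ t ∈ T.powersetCard n, ∑ k ∈ T \ t, x k * ∏ j ∈ t, x j := by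
        rw [Finset.sum_sigma', Finset.sum_sigma']
        refine Finset.sum_nbij' (fun p => ⟨p.1.erase p.2, p.2⟩) (fun p => ⟨insert p.2 p.1, p.2⟩)
          ?_ ?_ ?_ ?_ ?_
        · rintro ⟨s, k⟩ h
          simp only [Finset.mem_sigma, Finset.mem_powersetCard] at h ⊢
          obtain ⟨⟨hsT, hcard⟩, hks⟩ := h
          refine ⟨⟨(Finset.erase_subset _ _).trans hsT, by rw [Finset.card_erase_of_mem hks, hcard]; omega⟩, ?_⟩
          exact Finset.mem_sdiff.mpr ⟨hsT hks, Finset.notMem_erase _ _⟩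
        · rintro ⟨t, k⟩ h
          simp only [Finset.mem_sigma, Finset.mem_powersetCard, Finset.mem_sdiff] at h ⊢
          obtain ⟨⟨htT, hcard⟩, hkT, hkt⟩ := h
          refine ⟨⟨Finset.insert_subset hkT htT, ?_⟩, Finset.mem_insert_self _ _⟩
          rw [Finset.card_insert_of_notMem hkt, hcard]
        · rintro ⟨s, k⟩ h
          simp only [Finset.mem_sigma] at h
          simp [Finset.insert_erase h.2]
        · rintro ⟨t, k⟩ h
          simp only [Finset.mem_sigma, Finset.mem_sdiff] at h
          simp [Finset.erase_insert h.2.2]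
        · rintro ⟨s, k⟩ h
          rfl
      have e4 : ∑ t ∈ T.powersetCard n, ∑ k ∈ T \ t, x k * ∏ j ∈ t, x j
          ≤ ∑ t ∈ T.powersetCard n, (∑ k ∈ T, x k) * ∏ j ∈ t, x j := by
        refine Finset.sum_le_sum fun t _ => ?_
        rw [← Finset.sum_mul]
        refine mul_le_mul_of_nonneg_right ?_ (Finset.prod_nonneg fun j _ => hx j)
        exact Finset.sum_le_sum_of_subset_of_nonneg (Finset.sdiff_subset) fun k _ _ => hx k
      rw [e1, e3]
      calc _ ≤ ∑ t ∈ T.powersetCard n, (∑ k ∈ T, x k) * ∏ j ∈ t, x j := e4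
        _ = (∑ k ∈ T, x k) * ∑ s ∈ T.powersetCard n, ∏ k ∈ s, x k := by
            rw [Finset.mul_sum]
    calc ((n+1).factorial : ℝ) * ∑ s ∈ T.powersetCard (n+1), ∏ k ∈ s, x k
        = (n.factorial : ℝ) * (((n : ℝ) + 1) * ∑ s ∈ T.powersetCard (n+1), ∏ k ∈ s, x k) := by
          rw [Nat.factorial_succ]
          push_cast
          ring
      _ ≤ (n.factorial : ℝ) * ((∑ k ∈ T, x k) * ∑ s ∈ T.powersetCard n, ∏ k ∈ s, x k) := by
          refine mul_le_mul_of_nonneg_left key (by positivity)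
      _ = (∑ k ∈ T, x k) * ((n.factorial : ℝ) * ∑ s ∈ T.powersetCard n, ∏ k ∈ s, x k) := by ring
      _ ≤ (∑ k ∈ T, x k) * (∑ k ∈ T, x k) ^ n := mul_le_mul_of_nonneg_left (ih T) hT0
      _ = (∑ k ∈ T, x k) ^ (n+1) := by ring

lemma fin_strictMono_pnat_le {n : ℕ} (f : Fin n → ℕ+) (hf : StrictMono f) :
    ∀ i : Fin n, (i : ℕ) + 1 ≤ (f i : ℕ) := by
  have H : ∀ m : ℕ, ∀ h : m < n, m + 1 ≤ (f ⟨m, h⟩ : ℕ) := by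
    intro m
    induction m with
    | zero => intro h; exact (f ⟨0, h⟩).one_le
    | succ m ihm =>
      intro h
      have hm : m < n := Nat.lt_of_succ_lt h
      have hlt : f ⟨m, hm⟩ < f ⟨m+1, h⟩ := hf (by simp [Fin.mk_lt_mk])
      have := ihm hm
      have hcoe : (f ⟨m, hm⟩ : ℕ) < (f ⟨m+1, h⟩ : ℕ) := hlt
      omega
  intro i
  simpa using H i.1 i.2

lemma sum_sq_lower {n : ℕ} (s : Finset ℕ+) (h : s.card = n) :
    (n : ℝ) ^ 3 ≤ 3 * ∑ k ∈ s, ((k : ℕ) : ℝ) ^ 2 := by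
  classical
  have aux : ∀ m : ℕ, (m : ℝ) ^ 3 ≤ 3 * ∑ j ∈ Finset.range m, ((j : ℝ) + 1) ^ 2 := by
    intro m
    induction m with
    | zero => simp
    | succ m ihm =>
      rw [Finset.sum_range_succ]
      push_cast
      have hm0 : (0:ℝ) ≤ (m:ℝ) := Nat.cast_nonneg m
      nlinarith [ihm, hm0]
  set f := s.orderEmbOfFin h with hfdef
  have hmem : ∀ i : Fin n, f i ∈ s := fun i => s.orderEmbOfFin_mem h i
  have hsum : ∑ k ∈ s, ((k : ℕ) : ℝ) ^ 2 = ∑ i : Fin n, ((f i : ℕ) : ℝ) ^ 2 := by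
    refine (Finset.sum_nbij (fun i => f i) (fun i _ => hmem i) ?_ ?_ ?_).symm
    · intro i _ j _ hij
      exact f.injective hij
    · intro k hk
      have : k ∈ Set.range f := by rw [Finset.range_orderEmbOfFin]; exact hk
      obtain ⟨i, rfl⟩ := this
      exact Set.mem_image_of_mem _ (Finset.mem_coe.mpr (Finset.mem_univ i))
    · intro i _; rfl
  have hbound : ∑ i : Fin n, (((i : ℕ) : ℝ) + 1) ^ 2 ≤ ∑ i : Fin n, ((f i : ℕ) : ℝ) ^ 2 := by
    refine Finset.sum_le_sum fun i _ => ?_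
    have h1 : (i : ℕ) + 1 ≤ (f i : ℕ) := fin_strictMono_pnat_le f f.strictMono i
    have h2 : ((i : ℕ) : ℝ) + 1 ≤ ((f i : ℕ) : ℝ) := by exact_mod_cast h1
    have h0 : (0:ℝ) ≤ ((i : ℕ) : ℝ) + 1 := by positivity
    nlinarith
  have hfin : ∑ i : Fin n, (((i : ℕ) : ℝ) + 1) ^ 2 = ∑ j ∈ Finset.range n, ((j : ℝ) + 1) ^ 2 :=
    Fin.sum_univ_eq_sum_range (fun j => ((j : ℝ) + 1) ^ 2) n
  rw [hsum]
  calc (n : ℝ) ^ 3 ≤ 3 * ∑ j ∈ Finset.range n, ((j : ℝ) + 1) ^ 2 := aux n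
    _ = 3 * ∑ i : Fin n, (((i : ℕ) : ℝ) + 1) ^ 2 := by rw [hfin]
    _ ≤ 3 * ∑ i : Fin n, ((f i : ℕ) : ℝ) ^ 2 := by linarith

/-- Master bound: Gaussian-sum bound `S` on the `a₁` part, energy floor on the `a₂` part. -/
lemma master_bound {a₁ a₂ : ℝ} (h₁ : 0 < a₁) (h₂ : 0 ≤ a₂) (N : ℕ) (S : ℝ)
    (hS : ∀ T : Finset ℕ+, ∑ k ∈ T, Real.exp (-(a₁ * ((k : ℕ) : ℝ) ^ 2)) ≤ S)
    (T : Finset ℕ+) :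
    ∑ s ∈ T.powersetCard N, ∏ k ∈ s, Real.exp (-((a₁ + a₂) * ((k : ℕ) : ℝ) ^ 2))
      ≤ Real.exp (-(a₂ * (N : ℝ) ^ 3 / 3)) * S ^ N / (N.factorial : ℝ) := by
  have hS0 : 0 ≤ S := le_trans (by simp) (hS ∅)
  have step1 : ∀ s ∈ T.powersetCard N,
      ∏ k ∈ s, Real.exp (-((a₁ + a₂) * ((k : ℕ) : ℝ) ^ 2))
        ≤ Real.exp (-(a₂ * (N : ℝ) ^ 3 / 3)) * ∏ k ∈ s, Real.exp (-(a₁ * ((k : ℕ) : ℝ) ^ 2)) := by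
    intro s hs
    have hcard : s.card = N := (Finset.mem_powersetCard.mp hs).2
    have e1 : ∏ k ∈ s, Real.exp (-((a₁ + a₂) * ((k : ℕ) : ℝ) ^ 2))
        = (∏ k ∈ s, Real.exp (-(a₂ * ((k : ℕ) : ℝ) ^ 2)))
          * ∏ k ∈ s, Real.exp (-(a₁ * ((k : ℕ) : ℝ) ^ 2)) := by
      rw [← Finset.prod_mul_distrib]
      refine Finset.prod_congr rfl fun k _ => ?_
      rw [← Real.exp_add]
      congr 1
      ring
    have e2 : ∏ k ∈ s, Real.exp (-(a₂ * ((k : ℕ) : ℝ) ^ 2))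
        = Real.exp (-(a₂ * ∑ k ∈ s, ((k : ℕ) : ℝ) ^ 2)) := by
      rw [← Real.exp_sum]
      congr 1
      rw [Finset.mul_sum]
      simp [Finset.sum_neg_distrib]
    have e3 : Real.exp (-(a₂ * ∑ k ∈ s, ((k : ℕ) : ℝ) ^ 2))
        ≤ Real.exp (-(a₂ * (N : ℝ) ^ 3 / 3)) := by
      apply Real.exp_le_exp.mpr
      have := sum_sq_lower s hcard
      nlinarith [this, h₂]
    rw [e1, e2]
    exact mul_le_mul_of_nonneg_right e3 (Finset.prod_nonneg fun k _ => (Real.exp_pos _).le)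
  calc ∑ s ∈ T.powersetCard N, ∏ k ∈ s, Real.exp (-((a₁ + a₂) * ((k : ℕ) : ℝ) ^ 2))
      ≤ ∑ s ∈ T.powersetCard N,
          Real.exp (-(a₂ * (N : ℝ) ^ 3 / 3)) * ∏ k ∈ s, Real.exp (-(a₁ * ((k : ℕ) : ℝ) ^ 2)) :=
        Finset.sum_le_sum step1
    _ = Real.exp (-(a₂ * (N : ℝ) ^ 3 / 3))
        * ∑ s ∈ T.powersetCard N, ∏ k ∈ s, Real.exp (-(a₁ * ((k : ℕ) : ℝ) ^ 2)) := by
        rw [Finset.mul_sum]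
    _ ≤ Real.exp (-(a₂ * (N : ℝ) ^ 3 / 3)) * (S ^ N / (N.factorial : ℝ)) := by
        refine mul_le_mul_of_nonneg_left ?_ (Real.exp_pos _).le
        rw [le_div_iff₀ (by positivity : (0:ℝ) < (N.factorial : ℝ))]
        calc (∑ s ∈ T.powersetCard N, ∏ k ∈ s, Real.exp (-(a₁ * ((k : ℕ) : ℝ) ^ 2)))
              * (N.factorial : ℝ)
            = (N.factorial : ℝ) * ∑ s ∈ T.powersetCard N, ∏ k ∈ s,
                Real.exp (-(a₁ * ((k : ℕ) : ℝ) ^ 2)) := by ring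
          _ ≤ (∑ k ∈ T, Real.exp (-(a₁ * ((k : ℕ) : ℝ) ^ 2))) ^ N :=
              sum_powersetCard_prod_le _ (fun k => (Real.exp_pos _).le) N T
          _ ≤ S ^ N := by
              refine pow_le_pow_left₀ ?_ (hS T) N
              exact Finset.sum_nonneg fun k _ => (Real.exp_pos _).le
    _ = Real.exp (-(a₂ * (N : ℝ) ^ 3 / 3)) * S ^ N / (N.factorial : ℝ) := by ring

lemma numeric_ineq {β : ℝ} (hβ : 0 < β) :
    β / π ^ 2 + 2 * Real.sqrt 2 * Real.sqrt β / π ≤ Real.exp (β * π ^ 2 / 6) := by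
  have hπ : (3.14 : ℝ) < π := by linarith [Real.pi_gt_d6]
  have hπhi : π < 3.15 := by linarith [Real.pi_lt_d2]
  have hπpos : (0:ℝ) < π := by linarith
  set u := Real.sqrt β with hu
  have hu0 : 0 ≤ u := Real.sqrt_nonneg β
  have hu2 : u ^ 2 = β := Real.sq_sqrt hβ.le
  set s2 := Real.sqrt 2 with hs2def
  have hs20 : 0 ≤ s2 := Real.sqrt_nonneg 2
  have hs2hi : s2 < 1.5 := by
    rw [hs2def]
    rw [show (1.5:ℝ) = 1.5 from rfl]
    exact (Real.sqrt_lt' (by norm_num)).mpr (by norm_num)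
  have hexp : 1 + β * π ^ 2 / 6 ≤ Real.exp (β * π ^ 2 / 6) := by
    linarith [Real.add_one_le_exp (β * π ^ 2 / 6)]
  have main : β / π ^ 2 + 2 * s2 * u / π ≤ 1 + β * π ^ 2 / 6 := by
    rw [← hu2]
    rw [show (1:ℝ) + u^2*π^2/6 = (6*π^2 + u^2*π^4)/(6*π^2) by field_simp]
    rw [show u^2/π^2 + 2*s2*u/π = (6*u^2 + 12*s2*u*π)/(6*π^2) by field_simp; ring]
    rw [div_le_div_iff₀ (by positivity) (by positivity)]
    have hπ2 : (9.8:ℝ) < π^2 := by nlinarith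
    have hπ4 : (96:ℝ) < π^4 := by nlinarith
    have hsπ : s2 * π ≤ 4.725 := by nlinarith
    have h4 : 12*u*(s2*π) ≤ 12*u*4.725 :=
      mul_le_mul_of_nonneg_left hsπ (by positivity)
    have h12 : 12*s2*u*π ≤ 56.7*u := by nlinarith [h4]
    have hmain : 6*u^2 + 12*s2*u*π ≤ 6*π^2 + u^2*π^4 := by
      nlinarith [sq_nonneg (u - 1), sq_nonneg u]
    nlinarith [mul_le_mul_of_nonneg_right hmain (by positivity : (0:ℝ) ≤ 6*π^2)]
  linarith

set_option maxHeartbeats 1000000 in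
/-- Lemma 2 of the paper: for `N > Λ`,
`Z_N^{(0)}(Λ) ≤ (1/N!) (Λ/β)^N (1 + e^β βN/Λ)^Λ`. -/
theorem stmt_4 (β Λ : ℝ) (hβ : 0 < β) (hΛ : 0 < Λ) (N : ℕ) (hN : 0 < N)
    (hNΛ : Λ < N) :
    freeZ β Λ N ≤
      (1 / (N.factorial : ℝ)) * (Λ / β) ^ N *
        (1 + Real.exp β * β * N / Λ) ^ (Λ : ℝ) := by
  have hπ : (0:ℝ) < π := Real.pi_pos
  set a : ℝ := β * π ^ 2 / Λ ^ 2 with ha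
  have ha0 : 0 < a := by positivity
  set z : ℝ := Real.exp β * β * N / Λ with hz
  have hz0 : 0 ≤ z := by positivity
  have hone_le : (1:ℝ) ≤ (1 + z) ^ (Λ : ℝ) := Real.one_le_rpow (by linarith) hΛ.le
  have hRnonneg : (0:ℝ) ≤ 1 / (N.factorial : ℝ) * (Λ / β) ^ N * (1 + z) ^ (Λ : ℝ) := by
    positivity
  rw [freeZ]
  apply tsum_le_of_sum_le' hRnonneg
  intro F
  -- rewrite each term as a product
  have hterm : ∀ p : {s : Finset ℕ+ // s.card = N},
      Real.exp (-β * ∑ k ∈ p.1, π ^ 2 * ((k : ℕ) : ℝ) ^ 2 / Λ ^ 2)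
        = ∏ k ∈ p.1, Real.exp (-(a * ((k : ℕ) : ℝ) ^ 2)) := by
    intro p
    rw [← Real.exp_sum]
    congr 1
    rw [Finset.mul_sum]
    refine Finset.sum_congr rfl fun k _ => ?_
    rw [ha]
    field_simp
  rw [Finset.sum_congr rfl fun p _ => hterm p]
  set T : Finset ℕ+ := F.sup (fun p => p.1) with hT
  have hstep1 : ∑ p ∈ F, ∏ k ∈ p.1, Real.exp (-(a * ((k : ℕ) : ℝ) ^ 2))
      ≤ ∑ s ∈ T.powersetCard N, ∏ k ∈ s, Real.exp (-(a * ((k : ℕ) : ℝ) ^ 2)) := by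
    have himg : ∑ s ∈ F.image Subtype.val, ∏ k ∈ s, Real.exp (-(a * ((k : ℕ) : ℝ) ^ 2))
        = ∑ p ∈ F, ∏ k ∈ p.1, Real.exp (-(a * ((k : ℕ) : ℝ) ^ 2)) :=
      Finset.sum_image fun p _ q _ h => Subtype.ext h
    rw [← himg]
    refine Finset.sum_le_sum_of_subset_of_nonneg ?_ fun s _ _ =>
      Finset.prod_nonneg fun k _ => (Real.exp_pos _).le
    intro s hs
    simp only [Finset.mem_image] at hs
    obtain ⟨p, hp, rfl⟩ := hs
    exact Finset.mem_powersetCard.mpr ⟨Finset.le_sup hp, p.2⟩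
  -- the two S-bounds
  set S1 : ℝ := min (1 + 2 / Real.sqrt a) (1 / a) with hS1def
  have hS1 : ∀ T' : Finset ℕ+, ∑ k ∈ T', Real.exp (-(a * ((k : ℕ) : ℝ) ^ 2)) ≤ S1 := by
    intro T'
    refine le_min (pnat_gauss_sum_le ha0 T') ?_
    calc ∑ k ∈ T', Real.exp (-(a * ((k : ℕ) : ℝ) ^ 2))
        ≤ ∑ k ∈ T', Real.exp (-(a * ((k : ℕ) : ℝ))) := by
          refine Finset.sum_le_sum fun k _ => Real.exp_le_exp.mpr ?_
          have h1 : (1:ℝ) ≤ ((k : ℕ) : ℝ) := by exact_mod_cast k.one_le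
          have h2 : ((k : ℕ) : ℝ) ≤ ((k : ℕ) : ℝ) ^ 2 := by nlinarith
          nlinarith [mul_le_mul_of_nonneg_left h2 ha0.le]
      _ ≤ 1 / a := pnat_geom_sum_le ha0 T'
  have hS1nonneg : 0 ≤ S1 := le_trans (by simp) (hS1 ∅)
  by_cases hcase : β * S1 ≤ Λ
  · -- non-degenerate case: plain multinomial bound
    have hmb := master_bound ha0 le_rfl N S1 hS1 T
    simp only [add_zero, zero_mul, neg_zero, zero_div, Real.exp_zero, one_mul] at hmb
    have hS1le : S1 ≤ Λ / β := (le_div_iff₀' hβ).mpr hcase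
    calc ∑ p ∈ F, ∏ k ∈ p.1, Real.exp (-(a * ((k : ℕ) : ℝ) ^ 2))
        ≤ S1 ^ N / (N.factorial : ℝ) := le_trans hstep1 hmb
      _ ≤ (Λ / β) ^ N / (N.factorial : ℝ) := by
          apply div_le_div_of_nonneg_right ?_ (by positivity)
          exact pow_le_pow_left₀ hS1nonneg hS1le N
      _ = 1 / (N.factorial : ℝ) * (Λ / β) ^ N := by ring
      _ ≤ 1 / (N.factorial : ℝ) * (Λ / β) ^ N * (1 + z) ^ (Λ : ℝ) := by
          nlinarith [hone_le, (by positivity : (0:ℝ) ≤ 1 / (N.factorial : ℝ) * (Λ / β) ^ N)]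
  · -- degenerate case
    push_neg at hcase
    have hΛπ : π ^ 2 < Λ := by
      have h1 : β * S1 ≤ β * (1 / a) :=
        mul_le_mul_of_nonneg_left (min_le_right _ _) hβ.le
      have h2 : β * (1 / a) = Λ ^ 2 / π ^ 2 := by
        rw [ha]; field_simp
      have h3 : Λ < Λ ^ 2 / π ^ 2 := lt_of_lt_of_le hcase (h1.trans_eq h2)
      have h4 : Λ * π ^ 2 < Λ * Λ := by
        have := (lt_div_iff₀ (by positivity : (0:ℝ) < π ^ 2)).mp h3
        nlinarith [this]
      exact lt_of_mul_lt_mul_left h4 hΛ.le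
    have ha2 : 0 < a / 2 := by positivity
    set S2 : ℝ := 1 + 2 / Real.sqrt (a / 2) with hS2def
    have hS2 : ∀ T' : Finset ℕ+, ∑ k ∈ T', Real.exp (-((a / 2) * ((k : ℕ) : ℝ) ^ 2)) ≤ S2 :=
      fun T' => pnat_gauss_sum_le ha2 T'
    have hmb := master_bound ha2 ha2.le N S2 hS2 T
    rw [show a / 2 + a / 2 = a by ring] at hmb
    -- compute sqrt (a/2)
    have hsqrt : Real.sqrt (a / 2) = π * Real.sqrt β / (Real.sqrt 2 * Λ) := by
      rw [show a / 2 = (π * Real.sqrt β / (Real.sqrt 2 * Λ)) ^ 2 by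
        rw [div_pow, mul_pow, mul_pow, Real.sq_sqrt hβ.le,
          Real.sq_sqrt (by norm_num : (0:ℝ) ≤ 2), ha]; ring]
      exact Real.sqrt_sq (by positivity)
    have hs2pos : (0:ℝ) < Real.sqrt 2 := by positivity
    have hsβpos : (0:ℝ) < Real.sqrt β := Real.sqrt_pos.mpr hβ
    have hb2 : Real.sqrt β * Real.sqrt β = β := Real.mul_self_sqrt hβ.le
    have h2 : Real.sqrt 2 * Real.sqrt 2 = 2 := Real.mul_self_sqrt (by norm_num)
    have hkey : 2 / Real.sqrt (a / 2) * (β / Λ) = 2 * Real.sqrt 2 * Real.sqrt β / π := by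
      rw [hsqrt, div_div_eq_mul_div, div_mul_div_comm,
        div_eq_div_iff (by positivity) (by positivity)]
      linear_combination (-(2 * Real.sqrt 2 * Λ * π)) * hb2
    have hS2val : S2 * (β / Λ) = β / Λ + 2 * Real.sqrt 2 * Real.sqrt β / π := by
      rw [hS2def, add_mul, one_mul, hkey]
    have hc2 : S2 * (β / Λ) ≤ Real.exp (β * π ^ 2 / 6) := by
      rw [hS2val]
      have hd : β / Λ ≤ β / π ^ 2 := by
        apply div_le_div_of_nonneg_left hβ.le (by positivity) hΛπ.le
      linarith [numeric_ineq hβ]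
    have hexp2 : Real.exp (β * π ^ 2 / 6) ≤ Real.exp (a * (N : ℝ) ^ 2 / 6) := by
      apply Real.exp_le_exp.mpr
      have hN2 : Λ ^ 2 ≤ (N : ℝ) ^ 2 := by nlinarith
      have hmain : β * π ^ 2 ≤ a * (N : ℝ) ^ 2 := by
        rw [ha, div_mul_eq_mul_div, le_div_iff₀ (by positivity)]
        nlinarith [mul_le_mul_of_nonneg_left hN2 (by positivity : (0:ℝ) ≤ β * π ^ 2)]
      linarith
    have hS2le : S2 ≤ (Λ / β) * Real.exp (a * (N : ℝ) ^ 2 / 6) := by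
      have h1 : S2 * (β / Λ) ≤ Real.exp (a * (N : ℝ) ^ 2 / 6) := le_trans hc2 hexp2
      have h2 : 0 < β / Λ := by positivity
      calc S2 = S2 * (β / Λ) * (Λ / β) := by field_simp
        _ ≤ Real.exp (a * (N : ℝ) ^ 2 / 6) * (Λ / β) :=
            mul_le_mul_of_nonneg_right h1 (by positivity)
        _ = (Λ / β) * Real.exp (a * (N : ℝ) ^ 2 / 6) := by ring
    have hS2nonneg : 0 ≤ S2 := le_trans (by simp) (hS2 ∅)
    have hfin : Real.exp (-(a / 2 * (N : ℝ) ^ 3 / 3)) * S2 ^ N ≤ (Λ / β) ^ N := by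
      calc Real.exp (-(a / 2 * (N : ℝ) ^ 3 / 3)) * S2 ^ N
          ≤ Real.exp (-(a / 2 * (N : ℝ) ^ 3 / 3))
            * ((Λ / β) * Real.exp (a * (N : ℝ) ^ 2 / 6)) ^ N := by
            refine mul_le_mul_of_nonneg_left ?_ (Real.exp_pos _).le
            exact pow_le_pow_left₀ hS2nonneg hS2le N
        _ = (Λ / β) ^ N
            * (Real.exp (-(a / 2 * (N : ℝ) ^ 3 / 3)) * Real.exp (a * (N : ℝ) ^ 2 / 6) ^ N) := by
            rw [mul_pow]; ring
        _ = (Λ / β) ^ N := by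
            rw [← Real.exp_nat_mul, ← Real.exp_add]
            rw [show -(a / 2 * (N : ℝ) ^ 3 / 3) + (N : ℝ) * (a * (N : ℝ) ^ 2 / 6) = 0 by ring]
            rw [Real.exp_zero, mul_one]
    calc ∑ p ∈ F, ∏ k ∈ p.1, Real.exp (-(a * ((k : ℕ) : ℝ) ^ 2))
        ≤ Real.exp (-(a / 2 * (N : ℝ) ^ 3 / 3)) * S2 ^ N / (N.factorial : ℝ) :=
          le_trans hstep1 hmb
      _ ≤ (Λ / β) ^ N / (N.factorial : ℝ) :=
          div_le_div_of_nonneg_right hfin (by positivity)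
      _ = 1 / (N.factorial : ℝ) * (Λ / β) ^ N := by ring
      _ ≤ 1 / (N.factorial : ℝ) * (Λ / β) ^ N * (1 + z) ^ (Λ : ℝ) := by
          nlinarith [hone_le, (by positivity : (0:ℝ) ≤ 1 / (N.factorial : ℝ) * (Λ / β) ^ N)]
end

section
/- Let β > 0, Λ > 0, let n be a positive integer and m a nonnegative integer. Then Σ_{m<k_1<k_2<...<k_n} exp(−(β/Λ) Σ_{i=1}^n k_i) ≤ e^{−βmn/Λ} (1/n!) (Λ/β)^n, the sum running over strictly increasing n-tuples of integers all greater than m. -/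
open Real Filter

open scoped ENNReal

noncomputable def Sq (q : ℝ≥0∞) (n m : ℕ) : ℝ≥0∞ :=
  ∑' s : {s : Finset ℕ // s.card = n ∧ ∀ k ∈ s, m < k}, ∏ k ∈ s.1, q ^ k

def tailEquiv (n m : ℕ) :
    {s : Finset ℕ // s.card = n + 1 ∧ ∀ k ∈ s, m < k} ≃
      Σ l : ℕ, {t : Finset ℕ // t.card = n ∧ ∀ k ∈ t, m + 1 + l < k} where
  toFun s := by
    have hne : s.1.Nonempty := Finset.card_pos.mp (by rw [s.2.1]; omega)
    have ha : m < s.1.min' hne := s.2.2 _ (s.1.min'_mem hne)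
    refine ⟨s.1.min' hne - (m + 1), ⟨s.1.erase (s.1.min' hne), ?_, ?_⟩⟩
    · rw [Finset.card_erase_of_mem (s.1.min'_mem hne), s.2.1]; omega
    · intro k hk
      have hks : k ∈ s.1 := Finset.mem_of_mem_erase hk
      have hkne : k ≠ s.1.min' hne := Finset.ne_of_mem_erase hk
      have := s.1.min'_le k hks
      omega
  invFun p := ⟨insert (m + 1 + p.1) p.2.1, by
      rw [Finset.card_insert_of_notMem (fun h => by have := p.2.2.2 _ h; omega), p.2.2.1], by
      intro k hk
      rcases Finset.mem_insert.mp hk with h | h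
      · omega
      · have := p.2.2.2 _ h; omega⟩
  left_inv s := by
    have hne : s.1.Nonempty := Finset.card_pos.mp (by rw [s.2.1]; omega)
    have ha : m < s.1.min' hne := s.2.2 _ (s.1.min'_mem hne)
    apply Subtype.ext
    simp only
    rw [show m + 1 + (s.1.min' hne - (m + 1)) = s.1.min' hne by omega]
    exact Finset.insert_erase (s.1.min'_mem hne)
  right_inv p := by
    obtain ⟨l, t, ht, hlt⟩ := p
    have hni : m + 1 + l ∉ t := fun h => by have := hlt _ h; omega
    have hne : (insert (m + 1 + l) t).Nonempty := Finset.insert_nonempty _ _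
    have hmin : (insert (m + 1 + l) t).min' hne = m + 1 + l := by
      apply le_antisymm
      · exact Finset.min'_le _ _ (Finset.mem_insert_self _ _)
      · apply Finset.le_min'
        intro y hy
        rcases Finset.mem_insert.mp hy with h | h
        · omega
        · have := hlt _ h; omega
    have hl : (insert (m + 1 + l) t).min' hne - (m + 1) = l := by omega
    refine Sigma.ext ?_ ?_
    · simp [hmin]
    · simp only
      rw [Subtype.heq_iff_coe_eq]
      · simp only [hmin]
        exact Finset.erase_insert hni
      · intro x
        rw [hl]

lemma Sq_succ (q : ℝ≥0∞) (n m : ℕ) :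
    Sq q (n + 1) m = ∑' l : ℕ, q ^ (m + 1 + l) * Sq q n (m + 1 + l) := by
  rw [Sq, ← Equiv.tsum_eq (tailEquiv n m).symm, ENNReal.tsum_sigma']
  apply tsum_congr; intro l
  rw [Sq, ← ENNReal.tsum_mul_left]
  apply tsum_congr; rintro ⟨t, ht, hlt⟩
  have h1 : (((tailEquiv n m).symm ⟨l, ⟨t, ht, hlt⟩⟩ : {s : Finset ℕ // s.card = n + 1 ∧ ∀ k ∈ s, m < k}) : Finset ℕ) = insert (m + 1 + l) t := rfl
  rw [h1, Finset.prod_insert (fun h => by have := hlt _ h; omega)]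

lemma Sq_le (q : ℝ≥0∞) (n m : ℕ) :
    Sq q n m ≤ q ^ (m * n) * ∏ k ∈ Finset.range n, (q ^ (k + 1) * (1 - q ^ (k + 1))⁻¹) := by
  induction n generalizing m with
  | zero =>
    rw [Sq, tsum_eq_single ⟨∅, by simp⟩
      (fun b hb => absurd (Subtype.ext (Finset.card_eq_zero.mp b.2.1)) hb)]
    simp
  | succ n ih =>
    set P := ∏ k ∈ Finset.range n, (q ^ (k + 1) * (1 - q ^ (k + 1))⁻¹) with hP
    calc Sq q (n + 1) m = ∑' l : ℕ, q ^ (m + 1 + l) * Sq q n (m + 1 + l) := Sq_succ q n m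
      _ ≤ ∑' l : ℕ, q ^ (m + 1 + l) * (q ^ ((m + 1 + l) * n) * P) :=
          ENNReal.tsum_le_tsum (fun l => mul_le_mul_right (ih _) _)
      _ = ∑' l : ℕ, (q ^ (n + 1)) ^ l * (q ^ ((m + 1) * (n + 1)) * P) := by
          apply tsum_congr; intro l
          rw [← pow_mul, ← mul_assoc, ← pow_add, ← mul_assoc, ← pow_add]
          congr 1
          ring
      _ = (1 - q ^ (n + 1))⁻¹ * (q ^ ((m + 1) * (n + 1)) * P) := by
          rw [ENNReal.tsum_mul_right, ENNReal.tsum_geometric]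
      _ = q ^ (m * (n + 1)) * (P * (q ^ (n + 1) * (1 - q ^ (n + 1))⁻¹)) := by
          rw [show (m + 1) * (n + 1) = m * (n + 1) + (n + 1) by ring, pow_add]
          ring
      _ = q ^ (m * (n + 1)) * ∏ k ∈ Finset.range (n + 1), (q ^ (k + 1) * (1 - q ^ (k + 1))⁻¹) := by
          rw [Finset.prod_range_succ]

/-- Tail estimate: the sum over strictly increasing `n`-tuples of integers greater
than `m` of `exp(−(β/Λ) Σ k_i)` is at most `e^{−βmn/Λ} (1/n!) (Λ/β)^n`. -/
theorem stmt_5 (β Λ : ℝ) (hβ : 0 < β) (hΛ : 0 < Λ) (n : ℕ) (hn : 0 < n) (m : ℕ) :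
    (∑' s : {s : Finset ℕ // s.card = n ∧ ∀ k ∈ s, m < k},
        Real.exp (-(β / Λ) * ∑ k ∈ s.1, (k : ℝ))) ≤
      Real.exp (-(β * m * n) / Λ) * (1 / (n.factorial : ℝ)) * (Λ / β) ^ n := by
  have hx0 : 0 < β / Λ := div_pos hβ hΛ
  set x := β / Λ with hx
  set q : ℝ≥0∞ := ENNReal.ofReal (Real.exp (-x)) with hq
  set f : {s : Finset ℕ // s.card = n ∧ ∀ k ∈ s, m < k} → ℝ :=
    fun s => Real.exp (-x * ∑ k ∈ s.1, (k : ℝ)) with hf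
  have hnn : ∀ s, 0 ≤ f s := fun s => (Real.exp_pos _).le
  have hC : 0 ≤ Real.exp (-(β * m * n) / Λ) * (1 / (n.factorial : ℝ)) * (Λ / β) ^ n := by
    positivity
  -- each term as a product in ℝ≥0∞
  have hterm : ∀ s, ENNReal.ofReal (f s) = ∏ k ∈ (s : {s : Finset ℕ // s.card = n ∧ ∀ k ∈ s, m < k}).1, q ^ k := by
    intro s
    rw [hf]
    simp only
    rw [Finset.mul_sum, Real.exp_sum, ENNReal.ofReal_prod_of_nonneg (fun i _ => (Real.exp_pos _).le)]
    refine Finset.prod_congr rfl fun k _ => ?_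
    rw [show -x * (k : ℝ) = (k : ℝ) * (-x) by ring, Real.exp_nat_mul,
      ENNReal.ofReal_pow (Real.exp_pos _).le]
  -- ENNReal-level bound
  have key : (∑' s, ENNReal.ofReal (f s)) ≤
      ENNReal.ofReal (Real.exp (-(β * m * n) / Λ) * (1 / (n.factorial : ℝ)) * (Λ / β) ^ n) := by
    have h1 : (∑' s, ENNReal.ofReal (f s)) = Sq q n m := by
      rw [Sq]; exact tsum_congr hterm
    rw [h1]
    refine (Sq_le q n m).trans ?_
    have hfac : ∀ k : ℕ, q ^ (k + 1) * (1 - q ^ (k + 1))⁻¹ ≤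
        ENNReal.ofReal ((Λ / β) * (1 / (k + 1 : ℝ))) := by
      intro k
      set c : ℝ := ((k : ℝ) + 1) * x with hc
      have hc0 : 0 < c := by positivity
      have hy1 : Real.exp (-c) < 1 := by
        rw [Real.exp_lt_one_iff]; linarith
      have hy0 : 0 < Real.exp (-c) := Real.exp_pos _
      have hqk : q ^ (k + 1) = ENNReal.ofReal (Real.exp (-c)) := by
        rw [hq, ← ENNReal.ofReal_pow (Real.exp_pos _).le, ← Real.exp_nat_mul]
        congr 2
        push_cast
        rw [hc]; ring
      rw [hqk, ← ENNReal.ofReal_one, ← ENNReal.ofReal_sub _ hy0.le,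
        ← ENNReal.ofReal_inv_of_pos (by linarith), ← ENNReal.ofReal_mul hy0.le]
      apply ENNReal.ofReal_le_ofReal
      have he : Real.exp (-c) * (1 - Real.exp (-c))⁻¹ = (Real.exp c - 1)⁻¹ := by
        rw [Real.exp_neg]
        field_simp
      rw [he]
      have hce : c < Real.exp c - 1 := by
        have := Real.add_one_lt_exp (ne_of_gt hc0)
        linarith
      have : (Real.exp c - 1)⁻¹ ≤ c⁻¹ := by
        apply inv_anti₀ hc0 hce.le
      refine this.trans ?_
      apply le_of_eq
      rw [hc, hx, mul_inv, inv_div]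
      ring
    calc q ^ (m * n) * ∏ k ∈ Finset.range n, (q ^ (k + 1) * (1 - q ^ (k + 1))⁻¹)
        ≤ q ^ (m * n) * ∏ k ∈ Finset.range n, ENNReal.ofReal ((Λ / β) * (1 / (k + 1 : ℝ))) := by
          exact mul_le_mul_right (Finset.prod_le_prod' fun k _ => hfac k) _
      _ = ENNReal.ofReal (Real.exp (-(β * m * n) / Λ) * (1 / (n.factorial : ℝ)) * (Λ / β) ^ n) := by
          rw [← ENNReal.ofReal_prod_of_nonneg (fun k _ => by positivity)]
          rw [hq, ← ENNReal.ofReal_pow (Real.exp_pos _).le, ← Real.exp_nat_mul,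
            ← ENNReal.ofReal_mul (Real.exp_pos _).le]
          congr 1
          rw [Finset.prod_mul_distrib, Finset.prod_const]
          have h2 : (∏ k ∈ Finset.range n, (1 / ((k : ℝ) + 1))) = 1 / (n.factorial : ℝ) := by
            rw [Finset.prod_div_distrib, Finset.prod_const_one]
            congr 1
            rw [show (∏ k ∈ Finset.range n, ((k : ℝ) + 1)) = ((∏ k ∈ Finset.range n, (k + 1) : ℕ) : ℝ) by push_cast; ring]
            rw [Finset.prod_range_add_one_eq_factorial]
          rw [h2]
          have h3 : ((m * n : ℕ) : ℝ) * -x = -(β * m * n) / Λ := by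
            rw [hx]; push_cast; ring
          rw [h3, Finset.card_range]
          ring
    done
  -- conclude in ℝ
  by_cases hsum : Summable f
  · have := ENNReal.ofReal_tsum_of_nonneg hnn hsum
    rw [← this] at key
    exact (ENNReal.ofReal_le_ofReal_iff hC).mp key
  · rw [tsum_eq_zero_of_not_summable hsum]
    exact hC
end

section
/- Let β > 0, let Λ > 0 and let N be a positive integer with N > Λ. Define Z_N^{(0)}(Λ) = Σ_{0<k_1<...<k_N} exp(−β Σ_{i=1}^N π²k_i²/Λ²). Then (ln Z_N^{(0)}(Λ))/N ≤ ln(Λ/N) + (Λ/N) ln(1 + e^β β N/Λ) − ln β + 1. -/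
open Real Filter

private lemma aux_we (w : ℝ) (hw : 0 ≤ w) :
    w * (Real.exp w * Real.exp (-(π ^ 2 * w))) ≤ 1 / 8 := by
  have hπ : (3:ℝ) < π := Real.pi_gt_three
  have hπ2 : (9:ℝ) ≤ π ^ 2 := by nlinarith
  have hy0 : 0 ≤ (π ^ 2 - 1) * w := mul_nonneg (by nlinarith) hw
  have key : ((π ^ 2 - 1) * w) * Real.exp (-((π ^ 2 - 1) * w)) ≤ 1 := by
    have h1 : (π ^ 2 - 1) * w ≤ Real.exp ((π ^ 2 - 1) * w) := by
      linarith [Real.add_one_le_exp ((π ^ 2 - 1) * w)]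
    calc ((π ^ 2 - 1) * w) * Real.exp (-((π ^ 2 - 1) * w))
        ≤ Real.exp ((π ^ 2 - 1) * w) * Real.exp (-((π ^ 2 - 1) * w)) :=
          mul_le_mul_of_nonneg_right h1 (Real.exp_nonneg _)
      _ = 1 := by rw [← Real.exp_add]; simp
  have hexp : Real.exp w * Real.exp (-(π ^ 2 * w)) = Real.exp (-((π ^ 2 - 1) * w)) := by
    rw [← Real.exp_add]; ring_nf
  rw [hexp]
  nlinarith [Real.exp_pos (-((π ^ 2 - 1) * w)), key, hπ2, hw,
    mul_nonneg (show (0:ℝ) ≤ π ^ 2 - 9 by nlinarith)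
      (mul_nonneg hw (Real.exp_nonneg (-((π ^ 2 - 1) * w))))]

set_option maxHeartbeats 2000000 in
/-- For `N > Λ`:
`(ln Z_N^{(0)}(Λ))/N ≤ ln(Λ/N) + (Λ/N) ln(1 + e^β βN/Λ) − ln β + 1`. -/
theorem stmt_6 (β Λ : ℝ) (hβ : 0 < β) (hΛ : 0 < Λ) (N : ℕ) (hN : 0 < N)
    (hNΛ : Λ < N) :
    Real.log (freeZ β Λ N) / N ≤
      Real.log (Λ / N) + (Λ / N) * Real.log (1 + Real.exp β * β * N / Λ)
        - Real.log β + 1 := by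
  classical
  have hπ : (3:ℝ) < π := Real.pi_gt_three
  have hπ0 : (0:ℝ) < π := by linarith
  have hπ2 : (9:ℝ) ≤ π ^ 2 := by nlinarith
  have hNpos : (0:ℝ) < (N:ℝ) := by exact_mod_cast hN
  set z : ℝ := Real.exp β * β * ↑N / Λ with hzdef
  have hz0 : 0 < z := by positivity
  set m : ℕ := ⌊Λ⌋₊ + 1 with hmdef
  have hΛm : Λ < (m:ℝ) := by push_cast [hmdef]; exact Nat.lt_floor_add_one Λ
  have hm0 : (0:ℝ) < (m:ℝ) := lt_trans hΛ hΛm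
  have hm1 : (1:ℝ) ≤ (m:ℝ) := by
    have : 1 ≤ m := Nat.succ_le_succ (Nat.zero_le _)
    exact_mod_cast this
  set x : ℝ := β * π ^ 2 / Λ ^ 2 * ↑m with hxdef
  have hx0 : 0 < x := by positivity
  set r : ℝ := Real.exp (-x) with hrdef
  have hr0 : (0:ℝ) ≤ r := (Real.exp_pos _).le
  have hr1 : r < 1 := by
    rw [hrdef]
    exact Real.exp_lt_one_iff.mpr (by linarith)
  set a : ℕ+ → ℝ := fun k => z * Real.exp (-(β * (π ^ 2 * ((k:ℕ):ℝ) ^ 2 / Λ ^ 2))) with hadef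
  have ha0 : ∀ k, 0 < a k := fun k => by rw [hadef]; positivity
  have haz : ∀ k : ℕ+, a k ≤ z := by
    intro k
    rw [hadef]
    have h1 : Real.exp (-(β * (π ^ 2 * ((k:ℕ):ℝ) ^ 2 / Λ ^ 2))) ≤ 1 := by
      apply Real.exp_le_one_iff.mpr
      have : (0:ℝ) ≤ β * (π ^ 2 * ((k:ℕ):ℝ) ^ 2 / Λ ^ 2) := by positivity
      linarith
    calc z * Real.exp (-(β * (π ^ 2 * ((k:ℕ):ℝ) ^ 2 / Λ ^ 2))) ≤ z * 1 :=
        mul_le_mul_of_nonneg_left h1 hz0.le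
      _ = z := mul_one z
  -- tail term bound
  have htail1 : ∀ k : ℕ+, m ≤ (k:ℕ) → a k ≤ z * r ^ (k:ℕ) := by
    intro k hk
    have hkk : (m:ℝ) ≤ ((k:ℕ):ℝ) := by exact_mod_cast hk
    have hk0 : (0:ℝ) < ((k:ℕ):ℝ) := by linarith
    have hre : r ^ (k:ℕ) = Real.exp (((k:ℕ):ℝ) * (-x)) := by
      rw [hrdef, Real.exp_nat_mul]
    rw [hre, hadef]
    apply mul_le_mul_of_nonneg_left _ hz0.le
    apply Real.exp_le_exp.mpr
    have e1 : ((k:ℕ):ℝ) * (-x) = -(β * π ^ 2 * (((k:ℕ):ℝ) * ↑m) / Λ ^ 2) := by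
      rw [hxdef]; ring
    have e2 : -(β * (π ^ 2 * ((k:ℕ):ℝ) ^ 2 / Λ ^ 2))
        = -(β * π ^ 2 * (((k:ℕ):ℝ) * ((k:ℕ):ℝ)) / Λ ^ 2) := by ring
    rw [e1, e2]
    apply neg_le_neg
    gcongr
  -- geometric bound for sums over "tail" finsets
  have hgeo : ∀ G : Finset ℕ+, (∀ k ∈ G, m ≤ (k:ℕ)) →
      ∑ k ∈ G, a k ≤ z * (r ^ m * (1 - r)⁻¹) := by
    intro G hG
    have hinj : ∀ p ∈ G, ∀ q ∈ G, (p:ℕ) - m = (q:ℕ) - m → p = q := by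
      intro p hp q hq h
      have hp' := hG p hp; have hq' := hG q hq
      have : (p:ℕ) = (q:ℕ) := by omega
      exact PNat.coe_injective this
    calc ∑ k ∈ G, a k ≤ ∑ k ∈ G, z * r ^ (k:ℕ) :=
        Finset.sum_le_sum (fun k hk => htail1 k (hG k hk))
      _ = z * ∑ k ∈ G, r ^ (k:ℕ) := by rw [Finset.mul_sum]
      _ ≤ z * (r ^ m * (1 - r)⁻¹) := by
          apply mul_le_mul_of_nonneg_left _ hz0.le
          have himg : ∑ k ∈ G, r ^ (k:ℕ)
              = ∑ n ∈ G.image (fun k : ℕ+ => (k:ℕ) - m), r ^ m * r ^ n := by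
            rw [Finset.sum_image hinj]
            apply Finset.sum_congr rfl
            intro k hk
            rw [← pow_add]
            congr 1
            have := hG k hk
            omega
          rw [himg]
          have hsummable : Summable (fun n : ℕ => r ^ m * r ^ n) :=
            (summable_geometric_of_lt_one hr0 hr1).mul_left _
          calc ∑ n ∈ G.image (fun k : ℕ+ => (k:ℕ) - m), r ^ m * r ^ n
              ≤ ∑' n : ℕ, r ^ m * r ^ n :=
                Summable.sum_le_tsum _ (fun n _ => by positivity) hsummable
            _ = r ^ m * (1 - r)⁻¹ := by
                rw [tsum_mul_left, tsum_geometric_of_lt_one hr0 hr1]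
  -- numeric bounds
  have hxm : β * π ^ 2 ≤ x * ↑m := by
    have h1 : Λ ^ 2 ≤ ((m:ℝ)) ^ 2 := by nlinarith
    have e1 : x * ↑m = β * π ^ 2 * (((m:ℝ)) ^ 2 / Λ ^ 2) := by rw [hxdef]; ring
    rw [e1]
    have h2 : (1:ℝ) ≤ ((m:ℝ)) ^ 2 / Λ ^ 2 := (one_le_div (by positivity)).mpr h1
    exact le_mul_of_one_le_right (by positivity) h2
  have hE1 : Real.exp β * Real.exp (-(x * ↑m)) ≤ 1 := by
    rw [← Real.exp_add]
    apply Real.exp_le_one_iff.mpr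
    nlinarith [mul_le_mul_of_nonneg_left hπ2 hβ.le]
  have hA : z * Real.exp (-(x * ↑m)) ≤ ↑N / 9 * x := by
    have e1 : z * Real.exp (-(x * ↑m))
        = (β * ↑N / Λ) * (Real.exp β * Real.exp (-(x * ↑m))) := by rw [hzdef]; ring
    rw [e1]
    have h2 : (β * ↑N / Λ) * (Real.exp β * Real.exp (-(x * ↑m))) ≤ β * ↑N / Λ * 1 :=
      mul_le_mul_of_nonneg_left hE1 (by positivity)
    have h9 : 9 * Λ ≤ π ^ 2 * (m:ℝ) := by
      nlinarith [mul_nonneg (show (0:ℝ) ≤ π ^ 2 - 9 by linarith) hm0.le]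
    have h3 : β * ↑N / Λ ≤ ↑N / 9 * x := by
      have e2 : ↑N / 9 * x = (↑N * β * π ^ 2 * ↑m) / (9 * Λ ^ 2) := by rw [hxdef]; ring
      rw [e2, div_le_div_iff₀ hΛ (by positivity)]
      nlinarith [mul_le_mul_of_nonneg_left h9 (show (0:ℝ) ≤ β * ↑N * Λ by positivity)]
    linarith
  have hB : z * Real.exp (-(x * ↑m)) ≤ ↑N / 8 := by
    rcases le_or_gt 1 Λ with hΛ1 | hΛ1
    · -- Λ ≥ 1, use w = β
      have h4 : Real.exp (-(x * ↑m)) ≤ Real.exp (-(π ^ 2 * β)) :=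
        Real.exp_le_exp.mpr (by nlinarith)
      have h5 := aux_we β hβ.le
      have h6 : β * (Real.exp β * Real.exp (-(x * ↑m)))
          ≤ β * (Real.exp β * Real.exp (-(π ^ 2 * β))) := by
        apply mul_le_mul_of_nonneg_left _ hβ.le
        exact mul_le_mul_of_nonneg_left h4 (Real.exp_nonneg _)
      have h7 : ↑N / Λ ≤ (N:ℝ) := by
        rw [div_le_iff₀ hΛ]
        nlinarith [mul_le_mul_of_nonneg_left hΛ1 hNpos.le]
      calc z * Real.exp (-(x * ↑m))
          = (↑N / Λ) * (β * (Real.exp β * Real.exp (-(x * ↑m)))) := by rw [hzdef]; ring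
        _ ≤ ↑N * (1 / 8) := by
            apply mul_le_mul h7 (le_trans h6 h5) (by positivity) hNpos.le
        _ = ↑N / 8 := by ring
    · -- Λ < 1, use w = β/Λ
      have hw : (0:ℝ) < β / Λ := by positivity
      have hinvΛ : (1:ℝ) ≤ 1 / Λ := by rw [le_div_iff₀ hΛ]; linarith
      have hxm2 : π ^ 2 * (β / Λ) ≤ x * ↑m := by
        have e1 : x * ↑m = β * π ^ 2 / Λ ^ 2 * (↑m * ↑m) := by rw [hxdef]; ring
        have h2 : β * π ^ 2 / Λ ^ 2 ≤ β * π ^ 2 / Λ ^ 2 * (↑m * ↑m) := by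
          apply le_mul_of_one_le_right (by positivity)
          nlinarith
        have h3 : π ^ 2 * (β / Λ) ≤ β * π ^ 2 / Λ ^ 2 := by
          have e2 : β * π ^ 2 / Λ ^ 2 = (π ^ 2 * (β / Λ)) * (1 / Λ) := by
            field_simp
          rw [e2]
          exact le_mul_of_one_le_right (by positivity) hinvΛ
        rw [e1]; linarith
      have h4 : Real.exp (-(x * ↑m)) ≤ Real.exp (-(π ^ 2 * (β / Λ))) :=
        Real.exp_le_exp.mpr (by linarith)
      have h6 : Real.exp β ≤ Real.exp (β / Λ) := by
        apply Real.exp_le_exp.mpr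
        rw [le_div_iff₀ hΛ]; nlinarith
      have h5 := aux_we (β / Λ) hw.le
      have hinner : Real.exp β * Real.exp (-(x * ↑m))
          ≤ Real.exp (β / Λ) * Real.exp (-(π ^ 2 * (β / Λ))) :=
        mul_le_mul h6 h4 (Real.exp_nonneg _) (Real.exp_nonneg _)
      calc z * Real.exp (-(x * ↑m))
          = ↑N * ((β / Λ) * (Real.exp β * Real.exp (-(x * ↑m)))) := by rw [hzdef]; ring
        _ ≤ ↑N * ((β / Λ) * (Real.exp (β / Λ) * Real.exp (-(π ^ 2 * (β / Λ))))) := by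
            apply mul_le_mul_of_nonneg_left _ hNpos.le
            exact mul_le_mul_of_nonneg_left hinner hw.le
        _ ≤ ↑N * (1 / 8) := mul_le_mul_of_nonneg_left h5 hNpos.le
        _ = ↑N / 8 := by ring
  -- full numeric tail bound
  have hrm : r ^ m = Real.exp (-(x * ↑m)) := by
    rw [hrdef, ← Real.exp_nat_mul]
    congr 1
    ring
  have hnum : z * (r ^ m * (1 - r)⁻¹) ≤ (N:ℝ) := by
    have h1r : 0 < 1 - r := by linarith
    have hinv : (1 - r)⁻¹ ≤ (1 + x) / x := by
      have h3 : r ≤ (1 + x)⁻¹ := by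
        rw [hrdef, Real.exp_neg]
        exact inv_anti₀ (by positivity) (by linarith [Real.add_one_le_exp x])
      have h2 : x / (1 + x) ≤ 1 - r := by
        have e1 : x / (1 + x) = 1 - (1 + x)⁻¹ := by field_simp; ring
        rw [e1]; linarith
      calc (1 - r)⁻¹ ≤ (x / (1 + x))⁻¹ := inv_anti₀ (by positivity) h2
        _ = (1 + x) / x := by rw [inv_div]
    have hE0 : (0:ℝ) ≤ z * Real.exp (-(x * ↑m)) := by positivity
    have h7 : z * Real.exp (-(x * ↑m)) * (1 + x) ≤ ((N:ℝ) / 9 + (N:ℝ) / 8) * x := by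
      nlinarith [mul_le_mul_of_nonneg_right hB hx0.le, hA]
    calc z * (r ^ m * (1 - r)⁻¹) = z * Real.exp (-(x * ↑m)) * (1 - r)⁻¹ := by
          rw [hrm]; ring
      _ ≤ z * Real.exp (-(x * ↑m)) * ((1 + x) / x) := mul_le_mul_of_nonneg_left hinv hE0
      _ = z * Real.exp (-(x * ↑m)) * (1 + x) / x := by ring
      _ ≤ ((N:ℝ) / 9 + (N:ℝ) / 8) * x / x := by
          gcongr
      _ ≤ (N:ℝ) := by
          rw [mul_div_assoc, div_self hx0.ne', mul_one]
          linarith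
  -- product bound over any finite set of modes
  have hprodF : ∀ F : Finset ℕ+, ∏ k ∈ F, (1 + a k) ≤ (1 + z) ^ (Λ:ℝ) * Real.exp ↑N := by
    intro F
    have hsplit := Finset.prod_filter_mul_prod_filter_not F (fun k : ℕ+ => (k:ℕ) < m)
      (fun k => 1 + a k)
    have h1 : ∏ k ∈ F.filter (fun k : ℕ+ => (k:ℕ) < m), (1 + a k) ≤ (1 + z) ^ (Λ:ℝ) := by
      have hcard : (F.filter (fun k : ℕ+ => (k:ℕ) < m)).card ≤ ⌊Λ⌋₊ := by
        have := Finset.card_le_card_of_injOn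
          (s := F.filter (fun k : ℕ+ => (k:ℕ) < m))
          (t := Finset.Icc 1 ⌊Λ⌋₊) (fun k : ℕ+ => (k:ℕ)) ?mem ?inj
        · simpa [Nat.card_Icc] using this
        case mem =>
          intro k hk
          rw [Finset.mem_coe, Finset.mem_filter] at hk
          rw [Finset.mem_coe, Finset.mem_Icc]
          constructor
          · exact k.one_le
          · show (k:ℕ) ≤ ⌊Λ⌋₊
            omega
        case inj =>
          intro p _ q _ h
          exact PNat.coe_injective h
      calc ∏ k ∈ F.filter (fun k : ℕ+ => (k:ℕ) < m), (1 + a k)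
          ≤ (1 + z) ^ (F.filter (fun k : ℕ+ => (k:ℕ) < m)).card := by
            rw [← Finset.prod_const]
            exact Finset.prod_le_prod (fun k _ => by linarith [ha0 k])
              (fun k _ => by linarith [haz k])
        _ ≤ (1 + z) ^ ⌊Λ⌋₊ := pow_le_pow_right₀ (by linarith) hcard
        _ = (1 + z) ^ ((⌊Λ⌋₊ : ℕ) : ℝ) := by rw [Real.rpow_natCast]
        _ ≤ (1 + z) ^ (Λ:ℝ) :=
            Real.rpow_le_rpow_of_exponent_le (by linarith) (Nat.floor_le hΛ.le)
    have h2 : ∏ k ∈ F.filter (fun k : ℕ+ => ¬((k:ℕ) < m)), (1 + a k) ≤ Real.exp ↑N := by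
      have hsum2 : ∑ k ∈ F.filter (fun k : ℕ+ => ¬((k:ℕ) < m)), a k ≤ (N:ℝ) := by
        refine le_trans (hgeo _ ?_) hnum
        intro k hk
        rw [Finset.mem_filter] at hk
        omega
      calc ∏ k ∈ F.filter (fun k : ℕ+ => ¬((k:ℕ) < m)), (1 + a k)
          ≤ ∏ k ∈ F.filter (fun k : ℕ+ => ¬((k:ℕ) < m)), Real.exp (a k) :=
            Finset.prod_le_prod (fun k _ => by positivity)
              (fun k _ => by linarith [Real.add_one_le_exp (a k)])
        _ = Real.exp (∑ k ∈ F.filter (fun k : ℕ+ => ¬((k:ℕ) < m)), a k) :=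
            (Real.exp_sum _ _).symm
        _ ≤ Real.exp ↑N := Real.exp_le_exp.mpr hsum2
    calc ∏ k ∈ F, (1 + a k)
        = (∏ k ∈ F.filter (fun k : ℕ+ => (k:ℕ) < m), (1 + a k)) *
          ∏ k ∈ F.filter (fun k : ℕ+ => ¬((k:ℕ) < m)), (1 + a k) := hsplit.symm
      _ ≤ (1 + z) ^ (Λ:ℝ) * Real.exp ↑N := by
          apply mul_le_mul h1 h2 (Finset.prod_nonneg (fun k _ => by positivity))
            (by positivity)
  set C : ℝ := (1 + z) ^ (Λ:ℝ) * Real.exp ↑N / z ^ N with hCdef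
  have hC0 : 0 < C := by positivity
  -- the key partial-sum bound
  have hkey : ∀ u : Finset {s : Finset ℕ+ // s.card = N},
      ∑ s ∈ u, Real.exp (-β * ∑ k ∈ s.1, π ^ 2 * ((k:ℕ):ℝ) ^ 2 / Λ ^ 2) ≤ C := by
    intro u
    have hterm : ∀ s : {s : Finset ℕ+ // s.card = N},
        Real.exp (-β * ∑ k ∈ s.1, π ^ 2 * ((k:ℕ):ℝ) ^ 2 / Λ ^ 2)
          = (∏ k ∈ s.1, a k) / z ^ N := by
      intro s
      have h1 : ∏ k ∈ s.1, a k
          = z ^ N * Real.exp (-β * ∑ k ∈ s.1, π ^ 2 * ((k:ℕ):ℝ) ^ 2 / Λ ^ 2) := by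
        rw [hadef]
        rw [Finset.prod_mul_distrib, Finset.prod_const, s.2]
        congr 1
        rw [← Real.exp_sum]
        congr 1
        rw [Finset.mul_sum]
        exact Finset.sum_congr rfl (fun k _ => by ring)
      rw [h1]
      field_simp
    calc ∑ s ∈ u, Real.exp (-β * ∑ k ∈ s.1, π ^ 2 * ((k:ℕ):ℝ) ^ 2 / Λ ^ 2)
        = ∑ s ∈ u, (∏ k ∈ s.1, a k) / z ^ N :=
          Finset.sum_congr rfl (fun s _ => hterm s)
      _ = (∑ s ∈ u, ∏ k ∈ s.1, a k) / z ^ N := by rw [Finset.sum_div]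
      _ ≤ ((1 + z) ^ (Λ:ℝ) * Real.exp ↑N) / z ^ N := by
          refine (div_le_div_iff_of_pos_right (show (0:ℝ) < z ^ N from pow_pos hz0 N)).mpr ?_
          · -- main combinatorial step
            set F := u.sup (fun s => s.1) with hF
            have hsub : ∀ s ∈ u, s.1 ⊆ F := fun s hs => Finset.le_sup hs
            have hinj : ∀ s ∈ u, ∀ t ∈ u, s.1 = t.1 → s = t :=
              fun s _ t _ h => Subtype.ext h
            calc ∑ s ∈ u, ∏ k ∈ s.1, a k
                = ∑ v ∈ u.image (fun s => s.1), ∏ k ∈ v, a k :=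
                  (Finset.sum_image (f := fun v => ∏ k ∈ v, a k) hinj).symm
              _ ≤ ∑ v ∈ F.powerset, ∏ k ∈ v, a k := by
                  apply Finset.sum_le_sum_of_subset_of_nonneg
                  · intro v hv
                    rw [Finset.mem_image] at hv
                    obtain ⟨s, hs, rfl⟩ := hv
                    exact Finset.mem_powerset.mpr (hsub s hs)
                  · exact fun v _ _ => Finset.prod_nonneg fun k _ => (ha0 k).le
              _ = ∏ k ∈ F, (1 + a k) := by
                  have hpa := Finset.prod_add a (fun _ => (1:ℝ)) F
                  simp only [Finset.prod_const_one, mul_one] at hpa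
                  rw [← hpa]
                  exact Finset.prod_congr rfl (fun k _ => by ring)
              _ ≤ (1 + z) ^ (Λ:ℝ) * Real.exp ↑N := hprodF F
  have hsum : Summable (fun s : {s : Finset ℕ+ // s.card = N} =>
      Real.exp (-β * ∑ k ∈ s.1, π ^ 2 * ((k:ℕ):ℝ) ^ 2 / Λ ^ 2)) :=
    summable_of_sum_le (fun s => (Real.exp_pos _).le) hkey
  have hZC : freeZ β Λ N ≤ C := by
    rw [freeZ]
    exact Summable.tsum_le_of_sum_le hsum hkey
  have hZ0 : 0 < freeZ β Λ N := by
    rw [freeZ]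
    refine Summable.tsum_pos hsum (fun s => (Real.exp_pos _).le)
      ⟨(Finset.range N).map ⟨Nat.succPNat, fun p q h => by
          simpa [Nat.succPNat_inj] using h⟩, by simp⟩ (Real.exp_pos _)
  -- logarithms
  have hlogC : Real.log C = Λ * Real.log (1 + z) + ↑N - ↑N * Real.log z := by
    rw [hCdef, Real.log_div (by positivity) (by positivity),
      Real.log_mul (by positivity) (Real.exp_ne_zero _),
      Real.log_rpow (by linarith), Real.log_exp, Real.log_pow]
  have hlogz : Real.log z = β + Real.log β + Real.log ↑N - Real.log Λ := by
    rw [hzdef, Real.log_div (by positivity) hΛ.ne',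
      Real.log_mul (by positivity) hNpos.ne',
      Real.log_mul (Real.exp_ne_zero β) hβ.ne', Real.log_exp]
  have hlogZ : Real.log (freeZ β Λ N)
      ≤ Λ * Real.log (1 + z) + ↑N - ↑N * (β + Real.log β + Real.log ↑N - Real.log Λ) := by
    calc Real.log (freeZ β Λ N) ≤ Real.log C := Real.log_le_log hZ0 hZC
      _ = _ := by rw [hlogC, hlogz]
  have h9 : Real.log (freeZ β Λ N) / ↑N
      ≤ (Λ * Real.log (1 + z) + ↑N - ↑N * (β + Real.log β + Real.log ↑N - Real.log Λ)) / ↑N :=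
    (div_le_div_iff_of_pos_right hNpos).mpr hlogZ
  have h10 : (Λ * Real.log (1 + z) + ↑N
        - ↑N * (β + Real.log β + Real.log ↑N - Real.log Λ)) / ↑N
      = Λ / ↑N * Real.log (1 + z) + 1 - β - Real.log β - Real.log ↑N + Real.log Λ := by
    field_simp
    ring
  rw [h10] at h9
  rw [Real.log_div hΛ.ne' hNpos.ne']
  linarith
end

section
/- Let β > 0 be fixed. For each n let Λ_n > 0 and N_n a positive integer with Λ_n → ∞ and N_n/Λ_n → ∞ as n → ∞, and define Z_n^{(0)} = Σ_{0<k_1<...<k_{N_n}} exp(−β Σ_{i=1}^{N_n} π²k_i²/Λ_n²). Then (ln Z_n^{(0)})/N_n → −∞ as n → ∞. -/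
open Real Filter
open scoped ENNReal

lemma tsum_pi_pnat_pow (f : ℕ+ → ℝ≥0∞) :
    ∀ n : ℕ, (∑' g : Fin n → ℕ+, ∏ i, f (g i)) = (∑' k, f k) ^ n := by
  intro n
  induction n with
  | zero =>
    rw [pow_zero]
    have h1 : ∀ g : Fin 0 → ℕ+, (∏ i, f (g i)) = 1 := fun g => by simp
    simp only [h1]
    exact tsum_eq_single (fun i => i.elim0) (fun b hb => absurd (Subsingleton.elim b _) hb)
  | succ n ih =>
    rw [← (Fin.consEquiv (fun _ : Fin (n+1) => ℕ+)).tsum_eq]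
    have happ : ∀ p : ℕ+ × (Fin n → ℕ+),
        (∏ i, f ((Fin.consEquiv (fun _ : Fin (n+1) => ℕ+)) p i)) = f p.1 * ∏ i, f (p.2 i) := by
      intro p
      have : (fun i => f ((Fin.consEquiv (fun _ : Fin (n+1) => ℕ+)) p i))
          = Fin.cons (f p.1) (fun i => f (p.2 i)) := by
        funext i
        refine Fin.cases ?_ ?_ i <;> simp [Fin.consEquiv]
      rw [this, Fin.prod_cons]
    simp only [happ]
    rw [ENNReal.tsum_prod']
    simp only [ENNReal.tsum_mul_left]
    rw [ENNReal.tsum_mul_right, ih, pow_succ, mul_comm]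

lemma factorial_mul_tsum_card_le (f : ℕ+ → ℝ≥0∞) (n : ℕ) :
    (n.factorial : ℝ≥0∞) * ∑' s : {s : Finset ℕ+ // s.card = n}, ∏ k ∈ s.1, f k
      ≤ (∑' k, f k) ^ n := by
  rw [← tsum_pi_pnat_pow]
  set Φ : ({s : Finset ℕ+ // s.card = n} × Equiv.Perm (Fin n)) → (Fin n → ℕ+) :=
    fun p i => p.1.1.orderEmbOfFin p.1.2 (p.2 i) with hΦ
  have hinj : Function.Injective Φ := by
    rintro ⟨⟨s, hs⟩, σ⟩ ⟨⟨t, ht⟩, τ⟩ h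
    simp only [hΦ] at h
    have hrange : ∀ (u : Finset ℕ+) (hu : u.card = n) (ρ : Equiv.Perm (Fin n)),
        Set.range (fun i => u.orderEmbOfFin hu (ρ i)) = ↑u := by
      intro u hu ρ
      have : (fun i => u.orderEmbOfFin hu (ρ i)) = (u.orderEmbOfFin hu) ∘ ρ := rfl
      rw [this, Set.range_comp, Equiv.range_eq_univ, Set.image_univ, Finset.range_orderEmbOfFin]
    have hst : s = t := by
      have := (hrange s hs σ).symm.trans ((congrArg _ h).trans (hrange t ht τ))
      exact_mod_cast Finset.coe_inj.mp this
    subst hst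
    have hστ : σ = τ := by
      ext i
      have := congrFun h i
      have h2 := (s.orderEmbOfFin hs).injective this
      exact_mod_cast congrArg Fin.val h2
    subst hστ
    rfl
  calc (n.factorial : ℝ≥0∞) * ∑' s : {s : Finset ℕ+ // s.card = n}, ∏ k ∈ s.1, f k
      = ∑' p : ({s : Finset ℕ+ // s.card = n} × Equiv.Perm (Fin n)), ∏ i, f (Φ p i) := by
        rw [ENNReal.tsum_prod']
        have hp : ∀ (s : {s : Finset ℕ+ // s.card = n}) (σ : Equiv.Perm (Fin n)),
            (∏ i, f (Φ (s, σ) i)) = ∏ k ∈ s.1, f k := by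
          intro s σ
          have h1 : (∏ i, f (Φ (s, σ) i)) = ∏ i, f (s.1.orderEmbOfFin s.2 i) :=
            Equiv.prod_comp σ (fun j => f (s.1.orderEmbOfFin s.2 j))
          rw [h1]
          have h2 : (∏ i, f (s.1.orderEmbOfFin s.2 i)) = ∏ x : s.1, f x :=
            Equiv.prod_comp (s.1.orderIsoOfFin s.2).toEquiv (fun x : s.1 => f x)
          rw [h2, Finset.prod_coe_sort]
        simp only [hp]
        simp only [tsum_fintype, Finset.sum_const, Finset.card_univ, Fintype.card_perm,
          Fintype.card_fin, nsmul_eq_mul]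
        rw [ENNReal.tsum_mul_left]
    _ ≤ ∑' g : Fin n → ℕ+, ∏ i, f (g i) := ENNReal.tsum_comp_le_tsum_of_injective hinj _

lemma pow_self_le_factorial_mul_exp : ∀ n : ℕ, (n : ℝ) ^ n ≤ n.factorial * Real.exp n := by
  intro n
  induction n with
  | zero => simp
  | succ n ih =>
    have h1 : ((n:ℝ) + 1) ^ n ≤ (n:ℝ) ^ n * Real.exp 1 := by
      rcases Nat.eq_zero_or_pos n with h | h
      · subst h; simp [Real.exp_nonneg, le_trans zero_le_one (Real.one_le_exp zero_le_one)]
      · have hn : (0:ℝ) < n := by positivity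
        have : ((n:ℝ) + 1) ^ n = (n:ℝ) ^ n * (1 + 1 / n) ^ n := by
          rw [← mul_pow, mul_add, mul_one_div, div_self hn.ne', mul_one]
        rw [this]
        refine mul_le_mul_of_nonneg_left ?_ (by positivity)
        have h2 : (1 + 1 / (n:ℝ)) ^ n ≤ (Real.exp (1 / n)) ^ n := by
          refine pow_le_pow_left₀ (by positivity) ?_ n
          rw [add_comm]
          exact Real.add_one_le_exp _
        refine h2.trans ?_
        rw [← Real.exp_nat_mul, mul_one_div, div_self hn.ne']
    calc ((n+1 : ℕ) : ℝ) ^ (n+1) = ((n:ℝ)+1) * ((n:ℝ)+1) ^ n := by push_cast; ring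
      _ ≤ ((n:ℝ)+1) * ((n:ℝ) ^ n * Real.exp 1) := by
          refine mul_le_mul_of_nonneg_left h1 (by positivity)
      _ ≤ ((n:ℝ)+1) * ((n.factorial * Real.exp n) * Real.exp 1) := by
          refine mul_le_mul_of_nonneg_left (mul_le_mul_of_nonneg_right ih (Real.exp_nonneg 1)) (by positivity)
      _ = (n+1).factorial * Real.exp ((n+1 : ℕ)) := by
          rw [Nat.factorial_succ]; push_cast; rw [Real.exp_add]; ring

lemma single_sum_bound {a : ℝ} (ha : 0 < a) :
    Summable (fun k : ℕ+ => Real.exp (-(a * ((k : ℕ) : ℝ) ^ 2))) ∧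
    (∑' k : ℕ+, Real.exp (-(a * ((k : ℕ) : ℝ) ^ 2)))
      ≤ Real.exp (1 + 2 * Real.sqrt a) / Real.sqrt a := by
  set b := Real.sqrt a with hbdef
  have hb : 0 < b := Real.sqrt_pos.mpr ha
  have hb2 : b * b = a := Real.mul_self_sqrt ha.le
  set K : ℕ := ⌈1 / b⌉₊ with hK
  have hpt : ∀ k : ℕ+, Real.exp (-(a * ((k : ℕ) : ℝ) ^ 2))
      ≤ Real.exp (b * K) * Real.exp (-b) ^ (k : ℕ) := by
    intro k
    rw [← Real.exp_nat_mul, ← Real.exp_add]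
    refine Real.exp_le_exp.mpr ?_
    have hknn : (0:ℝ) ≤ (k:ℕ) := Nat.cast_nonneg _
    rcases le_or_gt (k : ℕ) K with h | h
    · nlinarith [(Nat.cast_le (α := ℝ)).mpr h, sq_nonneg ((k:ℕ):ℝ)]
    · have h1 : (1:ℝ) / b ≤ K := Nat.le_ceil _
      have h2 : (K:ℝ) + 1 ≤ (k:ℕ) := by exact_mod_cast Nat.succ_le_of_lt h
      have h3 : (1:ℝ) ≤ b * (k:ℕ) := by
        have : (1:ℝ)/b < (k:ℕ) := by linarith [Nat.cast_nonneg K (α := ℝ)]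
        calc (1:ℝ) = b * (1/b) := by field_simp
          _ ≤ b * (k:ℕ) := by nlinarith
      have h4 : b * (k:ℕ) ≤ a * ((k:ℕ):ℝ)^2 := by nlinarith
      nlinarith [mul_nonneg hb.le (Nat.cast_nonneg K (α := ℝ))]
  have hrlt : Real.exp (-b) < 1 := Real.exp_lt_one_iff.mpr (by linarith)
  have hrnn : (0:ℝ) ≤ Real.exp (-b) := Real.exp_nonneg _
  have hgeo : Summable (fun n : ℕ => Real.exp (-b) ^ n) :=
    summable_geometric_of_lt_one hrnn hrlt
  have hgeoP : Summable (fun k : ℕ+ => Real.exp (-b) ^ (k : ℕ)) :=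
    hgeo.comp_injective PNat.coe_injective
  have hmaj : Summable (fun k : ℕ+ => Real.exp (b * K) * Real.exp (-b) ^ (k : ℕ)) :=
    hgeoP.mul_left _
  have hsum : Summable (fun k : ℕ+ => Real.exp (-(a * ((k : ℕ) : ℝ) ^ 2))) :=
    Summable.of_nonneg_of_le (fun k => Real.exp_nonneg _) hpt hmaj
  refine ⟨hsum, ?_⟩
  have step1 : (∑' k : ℕ+, Real.exp (-(a * ((k : ℕ) : ℝ) ^ 2)))
      ≤ ∑' k : ℕ+, Real.exp (b * K) * Real.exp (-b) ^ (k : ℕ) :=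
    Summable.tsum_le_tsum hpt hsum hmaj
  have step2 : (∑' k : ℕ+, Real.exp (b * K) * Real.exp (-b) ^ (k : ℕ))
      ≤ Real.exp (b * K) * (1 - Real.exp (-b))⁻¹ := by
    rw [tsum_mul_left]
    refine mul_le_mul_of_nonneg_left ?_ (Real.exp_nonneg _)
    have : (∑' k : ℕ+, Real.exp (-b) ^ (k : ℕ)) ≤ ∑' n : ℕ, Real.exp (-b) ^ n :=
      hgeoP.tsum_le_tsum_of_inj (fun k : ℕ+ => (k : ℕ)) PNat.coe_injective
        (fun c _ => by positivity) (fun k => le_rfl) hgeo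
    rw [tsum_geometric_of_lt_one hrnn hrlt] at this
    exact this
  refine (step1.trans step2).trans ?_
  have hbK : b * K ≤ 1 + b := by
    have h1 : (K:ℝ) < 1 / b + 1 := Nat.ceil_lt_add_one (by positivity)
    have := mul_lt_mul_of_pos_left h1 hb
    rw [mul_add, mul_one_div, div_self hb.ne', mul_one] at this
    linarith
  have hinv : (1 - Real.exp (-b))⁻¹ ≤ Real.exp b / b := by
    have he : b * Real.exp (-b) ≤ 1 - Real.exp (-b) := by
      have := Real.add_one_le_exp b
      have hx : (b + 1) * Real.exp (-b) ≤ Real.exp b * Real.exp (-b) :=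
        mul_le_mul_of_nonneg_right this (Real.exp_nonneg _)
      rw [← Real.exp_add, add_neg_cancel, Real.exp_zero] at hx
      nlinarith [Real.exp_nonneg (-b)]
    have hpos : (0:ℝ) < b * Real.exp (-b) := by positivity
    have h2 : (1 - Real.exp (-b))⁻¹ ≤ (b * Real.exp (-b))⁻¹ :=
      inv_anti₀ hpos he
    refine h2.trans ?_
    rw [mul_inv, Real.exp_neg, inv_inv, mul_comm, ← div_eq_mul_inv]
  calc Real.exp (b * K) * (1 - Real.exp (-b))⁻¹
      ≤ Real.exp (1 + b) * (Real.exp b / b) := by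
        refine mul_le_mul (Real.exp_le_exp.mpr hbK) hinv (inv_nonneg.mpr (by linarith)) (Real.exp_nonneg _)
    _ = Real.exp (1 + 2 * b) / b := by
        rw [show (1:ℝ) + 2*b = (1+b)+b by ring, Real.exp_add, Real.exp_add]
        field_simp [Real.exp_add]
        rw [Real.exp_add]

lemma freeZ_log_bound (β : ℝ) (hβ : 0 < β) (L : ℝ) (hL : 0 < L) (n : ℕ) (hn : 0 < n) :
    Real.log (freeZ β L n) / n ≤ 2 + 2 * Real.sqrt (β * π ^ 2 / L ^ 2)
      - Real.log (Real.sqrt (β * π ^ 2 / L ^ 2)) - Real.log n := by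
  have hπ := Real.pi_pos
  set a : ℝ := β * π ^ 2 / L ^ 2 with hadef
  have ha : 0 < a := by positivity
  set b := Real.sqrt a with hbdef
  have hb : 0 < b := Real.sqrt_pos.mpr ha
  set f₀ : ℕ+ → ℝ := fun k => Real.exp (-(a * ((k : ℕ) : ℝ) ^ 2)) with hf₀
  set g : {s : Finset ℕ+ // s.card = n} → ℝ := fun s => ∏ k ∈ s.1, f₀ k with hg
  have hterm : ∀ s : {s : Finset ℕ+ // s.card = n},
      Real.exp (-β * ∑ k ∈ s.1, π ^ 2 * ((k : ℕ) : ℝ) ^ 2 / L ^ 2) = g s := by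
    intro s
    rw [hg]
    have : -β * ∑ k ∈ s.1, π ^ 2 * ((k : ℕ) : ℝ) ^ 2 / L ^ 2
        = ∑ k ∈ s.1, -(a * ((k : ℕ) : ℝ) ^ 2) := by
      rw [Finset.mul_sum]
      refine Finset.sum_congr rfl fun k _ => ?_
      rw [hadef]; field_simp
    rw [this, Real.exp_sum]
  have hgnonneg : ∀ s, 0 ≤ g s := fun s => Finset.prod_nonneg fun k _ => Real.exp_nonneg _
  have hf₀nonneg : ∀ k, 0 ≤ f₀ k := fun k => Real.exp_nonneg _
  obtain ⟨hTsum, hTle⟩ := single_sum_bound ha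
  set T : ℝ := ∑' k : ℕ+, f₀ k with hT
  have hTnonneg : 0 ≤ T := tsum_nonneg hf₀nonneg
  -- ENNReal side
  set F : ℕ+ → ℝ≥0∞ := fun k => ENNReal.ofReal (f₀ k) with hF
  have hFsum : (∑' k, F k) = ENNReal.ofReal T :=
    (ENNReal.ofReal_tsum_of_nonneg hf₀nonneg hTsum).symm
  have hprod : ∀ s : {s : Finset ℕ+ // s.card = n},
      (∏ k ∈ s.1, F k) = ENNReal.ofReal (g s) := by
    intro s
    rw [hg, ENNReal.ofReal_prod_of_nonneg fun k _ => hf₀nonneg k]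
  have hkey := factorial_mul_tsum_card_le F n
  rw [hFsum] at hkey
  simp only [hprod] at hkey
  have hfin : ENNReal.ofReal T ^ n ≠ ⊤ := by
    exact ENNReal.pow_ne_top ENNReal.ofReal_ne_top
  have hSfin : (∑' s : {s : Finset ℕ+ // s.card = n}, ENNReal.ofReal (g s)) ≠ ⊤ := by
    intro hcon
    rw [hcon] at hkey
    have : (n.factorial : ℝ≥0∞) * ⊤ = ⊤ := by
      refine ENNReal.mul_top ?_
      exact_mod_cast Nat.factorial_ne_zero n
    rw [this] at hkey
    exact hfin (top_le_iff.mp hkey)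
  have hgsum : Summable g := by
    have := ENNReal.summable_toReal hSfin
    refine this.congr fun s => ?_
    rw [ENNReal.toReal_ofReal (hgnonneg s)]
  have hZeq : freeZ β L n = ∑' s, g s := by
    rw [freeZ]
    exact tsum_congr hterm
  have hZofReal : ENNReal.ofReal (freeZ β L n)
      = ∑' s : {s : Finset ℕ+ // s.card = n}, ENNReal.ofReal (g s) := by
    rw [hZeq]
    exact ENNReal.ofReal_tsum_of_nonneg hgnonneg hgsum
  -- transfer key inequality to ℝ
  have hZle : (n.factorial : ℝ) * freeZ β L n ≤ T ^ n := by
    have h1 : ENNReal.ofReal ((n.factorial : ℝ) * freeZ β L n) ≤ ENNReal.ofReal (T ^ n) := by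
      rw [ENNReal.ofReal_mul (by positivity), ENNReal.ofReal_natCast, hZofReal,
        ← ENNReal.ofReal_pow hTnonneg] at *
      exact hkey
    exact (ENNReal.ofReal_le_ofReal_iff (by positivity)).mp h1
  -- positivity of freeZ
  have hZpos : 0 < freeZ β L n := by
    rw [hZeq]
    set s₀ : Finset ℕ+ := (Finset.range n).map
      ⟨fun i => ⟨i + 1, Nat.succ_pos i⟩, fun i j h => by
        simpa using congrArg (fun x : ℕ+ => (x : ℕ)) h⟩ with hs₀
    have hcard : s₀.card = n := by rw [hs₀, Finset.card_map, Finset.card_range]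
    refine Summable.tsum_pos hgsum hgnonneg ⟨s₀, hcard⟩ ?_
    exact Finset.prod_pos fun k _ => Real.exp_pos _
  -- bound on T
  set B : ℝ := Real.exp (1 + 2 * b) / b with hB
  have hBpos : 0 < B := by positivity
  have hTB : T ≤ B := hTle
  have hnfacpos : (0:ℝ) < n.factorial := by exact_mod_cast Nat.factorial_pos n
  have hZle2 : freeZ β L n ≤ B ^ n / n.factorial := by
    rw [le_div_iff₀ hnfacpos]
    calc freeZ β L n * n.factorial = n.factorial * freeZ β L n := by ring
      _ ≤ T ^ n := hZle
      _ ≤ B ^ n := pow_le_pow_left₀ hTnonneg hTB n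
  -- take logs
  have hlogZ : Real.log (freeZ β L n) ≤ n * (1 + 2 * b - Real.log b) - Real.log n.factorial := by
    calc Real.log (freeZ β L n) ≤ Real.log (B ^ n / n.factorial) :=
          Real.log_le_log hZpos hZle2
      _ = n * Real.log B - Real.log n.factorial := by
          rw [Real.log_div (by positivity) (by positivity), Real.log_pow]
      _ = n * (1 + 2 * b - Real.log b) - Real.log n.factorial := by
          rw [hB, Real.log_div (Real.exp_ne_zero _) hb.ne', Real.log_exp]
  have hlogfac : (n:ℝ) * Real.log n - n ≤ Real.log n.factorial := by
    have h1 := pow_self_le_factorial_mul_exp n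
    have hn1 : (1:ℝ) ≤ n := by exact_mod_cast hn
    have h2 : Real.log ((n:ℝ) ^ n) ≤ Real.log (n.factorial * Real.exp n) :=
      Real.log_le_log (by positivity) h1
    rw [Real.log_pow, Real.log_mul (by positivity) (Real.exp_ne_zero _), Real.log_exp] at h2
    linarith
  have hnpos : (0:ℝ) < n := by exact_mod_cast hn
  rw [div_le_iff₀ hnpos]
  calc Real.log (freeZ β L n) ≤ n * (1 + 2 * b - Real.log b) - Real.log n.factorial := hlogZ
    _ ≤ n * (1 + 2 * b - Real.log b) - ((n:ℝ) * Real.log n - n) := by linarith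
    _ = (2 + 2 * b - Real.log b - Real.log n) * n := by ring

/-- If `Λ_n → ∞` and `N_n/Λ_n → ∞`, then `(ln Z_n^{(0)})/N_n → −∞`. -/
theorem stmt_7 (β : ℝ) (hβ : 0 < β) (Λ : ℕ → ℝ) (N : ℕ → ℕ)
    (hΛpos : ∀ n, 0 < Λ n) (hNpos : ∀ n, 0 < N n)
    (hΛ : Tendsto Λ atTop atTop)
    (hρ : Tendsto (fun n => (N n : ℝ) / Λ n) atTop atTop) :
    Tendsto (fun n => Real.log (freeZ β (Λ n) (N n)) / N n) atTop atBot := by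
  have hπ := Real.pi_pos
  set c : ℝ := Real.sqrt (β * π ^ 2) with hc
  have hcpos : 0 < c := Real.sqrt_pos.mpr (by positivity)
  have hbeq : ∀ n, Real.sqrt (β * π ^ 2 / (Λ n) ^ 2) = c / Λ n := by
    intro n
    rw [Real.sqrt_div (by positivity), Real.sqrt_sq (hΛpos n).le]
  set D : ℕ → ℝ := fun n => 2 + 2 * (c / Λ n) - Real.log (c * ((N n : ℝ) / Λ n)) with hD
  have hbound : ∀ n, Real.log (freeZ β (Λ n) (N n)) / N n ≤ D n := by
    intro n
    have h1 := freeZ_log_bound β hβ (Λ n) (hΛpos n) (N n) (hNpos n)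
    rw [hbeq n] at h1
    have h2 : Real.log (c / Λ n) + Real.log (N n) = Real.log (c * ((N n : ℝ) / Λ n)) := by
      rw [← Real.log_mul (div_pos hcpos (hΛpos n)).ne' (by exact_mod_cast (hNpos n).ne')]
      congr 1
      field_simp
    rw [hD]
    simp only
    linarith
  refine tendsto_atBot_mono hbound ?_
  have h3 : Tendsto (fun n => c * ((N n : ℝ) / Λ n)) atTop atTop :=
    hρ.const_mul_atTop hcpos
  have h4 : Tendsto (fun n => Real.log (c * ((N n : ℝ) / Λ n))) atTop atTop :=
    Real.tendsto_log_atTop.comp h3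
  have h5 : Tendsto (fun n => 2 + 2 * (c / Λ n)) atTop (nhds (2 + 2 * 0)) := by
    refine tendsto_const_nhds.add (Tendsto.const_mul _ ?_)
    exact Tendsto.div_atTop tendsto_const_nhds hΛ
  have h6 : Tendsto (fun n => -Real.log (c * ((N n : ℝ) / Λ n))) atTop atBot :=
    tendsto_neg_atTop_atBot.comp h4
  have := h5.add_atBot h6
  refine this.congr fun n => ?_
  rw [hD]
  ring
end
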